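/- arXiv:1902.00600 — 6 statements merged into one kernel-verified Lean document; each statement's English description precedes it below -/
import Mathlib

section
/- For every real number z, exp(−z) − 1 + z ≥ z² / (2 + |z|). -/
open Real

private lemma cubic_le_exp {t : ℝ} (ht : 0 ≤ t) :
    1 + t + t ^ 2 / 2 + t ^ 3 / 6 ≤ Real.exp t := by
  have := Real.sum_le_exp_of_nonneg ht 4
  simp [Finset.sum_range_succ, Nat.factorial] at this
  linarith

private lemma key_mono : Monotone (fun z : ℝ => 2 + z - (2 - z) * Real.exp z) := by
  have hd : ∀ z : ℝ, HasDerivAt (fun z : ℝ => 2 + z - (2 - z) * Real.exp z)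
      (1 - (1 - z) * Real.exp z) z := by
    intro z
    have h1 : HasDerivAt (fun z : ℝ => (2 - z) * Real.exp z)
        ((-1) * Real.exp z + (2 - z) * Real.exp z) z :=
      (((hasDerivAt_id z).const_sub 2)).mul (Real.hasDerivAt_exp z)
    have h2 : HasDerivAt (fun z : ℝ => 2 + z) 1 z := (hasDerivAt_id z).const_add 2
    have : HasDerivAt (fun z : ℝ => 2 + z - (2 - z) * Real.exp z)
        (1 - ((-1) * Real.exp z + (2 - z) * Real.exp z)) z := h2.sub h1
    convert this using 1
    ring
  apply monotone_of_deriv_nonneg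
  · exact fun z => (hd z).differentiableAt
  · intro z
    rw [(hd z).deriv]
    have h1 : 1 - z ≤ Real.exp (-z) := by
      have := Real.add_one_le_exp (-z); linarith
    have h2 : (1 - z) * Real.exp z ≤ Real.exp (-z) * Real.exp z :=
      mul_le_mul_of_nonneg_right h1 (Real.exp_pos z).le
    rw [← Real.exp_add, neg_add_cancel, Real.exp_zero] at h2
    linarith

/-- Lemma 4 (deterministic functional inequality): for every real `z`,
`exp(−z) − 1 + z ≥ z² / (2 + |z|)`. -/
theorem exp_neg_sub_one_add_ge_sq_div (z : ℝ) :
    Real.exp (-z) - 1 + z ≥ z ^ 2 / (2 + |z|) := by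
  rcases le_or_gt 0 z with hz | hz
  · rw [abs_of_nonneg hz, ge_iff_le, div_le_iff₀ (by linarith)]
    have hkey : (2 - z) * Real.exp z ≤ 2 + z := by
      have := key_mono hz
      simpa [Real.exp_zero] using this
    have hmul : (2 - z) * Real.exp z * Real.exp (-z) ≤ (2 + z) * Real.exp (-z) :=
      mul_le_mul_of_nonneg_right hkey (Real.exp_pos _).le
    rw [mul_assoc, ← Real.exp_add, add_neg_cancel, Real.exp_zero, mul_one] at hmul
    nlinarith [Real.exp_pos (-z)]
  · rw [abs_of_neg hz, ge_iff_le, div_le_iff₀ (by linarith)]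
    have ht : 0 ≤ -z := by linarith
    have hc := cubic_le_exp ht
    nlinarith [sq_nonneg z, mul_pos (mul_pos (neg_pos.mpr hz) (neg_pos.mpr hz)) (neg_pos.mpr hz)]
end

section
/- Let μ be the Gibbs distribution of a discrete graphical model with maximum interaction strength γ. Then for any two disjoint subsets A, B ⊆ V and any configuration σ̄, μ({σ : σ agrees with σ̄ on all coordinates in A ∪ B}) ≥ (Π_{i∈A} exp(−2γ)/|A_i|) · μ({σ : σ agrees with σ̄ on all coordinates in B}). Equivalently, the conditional probability of the coordinates in A given those in B is at least Π_{i∈A} exp(−2γ)/|A_i|. -/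
open Finset

/-- The locally centered basis function
`g_{ik}(σ) = f_k(σ) − (1/|A_i|) Σ_{a∈A_i} f_k(σ[i:=a])`. -/
noncomputable def locg {V : Type*} [DecidableEq V] (A : V → Type*) [∀ i, Fintype (A i)]
    {K : Type*} (f : K → (∀ i, A i) → ℝ) (i : V) (k : K) (σ : ∀ j, A j) : ℝ :=
  f k σ - (1 / (Fintype.card (A i) : ℝ)) * ∑ a : A i, f k (Function.update σ i a)

/-- The set of factors `K_i = {k ∈ K : i ∈ ∂k}` whose neighborhood contains `i`. -/
def Kat {V K : Type*} [Fintype K] [DecidableEq V] (nbr : K → Finset V) (i : V) : Finset K :=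
  Finset.univ.filter (fun k => i ∈ nbr k)

/-- Lemma 1 (lower-bounded conditional probabilities): for a Gibbs distribution with
maximum interaction strength `γ` and any disjoint `A, B ⊆ V`,
`μ(σ agrees with σ̄ on A ∪ B) ≥ (Π_{i∈A} exp(−2γ)/|A_i|) · μ(σ agrees with σ̄ on B)`. -/
theorem conditional_probability_lower_bound
    {V : Type*} [Fintype V] [DecidableEq V]
    (A : V → Type*) [∀ i, Fintype (A i)] [∀ i, Nonempty (A i)] [∀ i, DecidableEq (A i)]
    {K : Type*} [Fintype K]
    (nbr : K → Finset V) (f : K → (∀ i, A i) → ℝ)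
    (hloc : ∀ k (σ τ : ∀ i, A i), (∀ i ∈ nbr k, σ i = τ i) → f k σ = f k τ)
    (θ : K → ℝ) (γ : ℝ)
    (hγ : ∀ (i : V) (σ : ∀ j, A j), |∑ k ∈ Kat nbr i, θ k * locg A f i k σ| ≤ γ)
    (μ : (∀ i, A i) → ℝ)
    (hμ : ∀ σ, μ σ =
      Real.exp (∑ k, θ k * f k σ) / ∑ τ : ∀ i, A i, Real.exp (∑ k, θ k * f k τ))
    (SA SB : Finset V) (hdis : Disjoint SA SB) (σbar : ∀ i, A i) :
    ∑ σ ∈ univ.filter (fun σ : ∀ i, A i => ∀ i ∈ SA ∪ SB, σ i = σbar i), μ σ ≥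
      (∏ i ∈ SA, Real.exp (-(2 * γ)) / (Fintype.card (A i) : ℝ)) *
        ∑ σ ∈ univ.filter (fun σ : ∀ i, A i => ∀ i ∈ SB, σ i = σbar i), μ σ := by
  classical
  set w : (∀ i, A i) → ℝ := fun σ => Real.exp (∑ k, θ k * f k σ) with hw
  have hwpos : ∀ σ, 0 < w σ := fun σ => Real.exp_pos _
  -- pointwise comparison after changing one coordinate
  have point : ∀ (i : V) (σ : ∀ j, A j) (a b : A i),
      w (Function.update σ i a) ≤ Real.exp (2 * γ) * w (Function.update σ i b) := by
    intro i σ a b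
    set h : A i → ℝ := fun x => ∑ k ∈ Kat nbr i, θ k * f k (Function.update σ i x) with hh
    have hsplit : ∀ x : A i, ∑ k, θ k * f k (Function.update σ i x)
        = h x + ∑ k ∈ (Kat nbr i)ᶜ, θ k * f k σ := by
      intro x
      rw [← Finset.sum_add_sum_compl (Kat nbr i) (fun k => θ k * f k (Function.update σ i x))]
      congr 1
      refine Finset.sum_congr rfl fun k hk => ?_
      have hik : i ∉ nbr k := by
        simp only [Kat, Finset.mem_compl, Finset.mem_filter, Finset.mem_univ, true_and] at hk
        exact hk
      have : f k (Function.update σ i x) = f k σ := by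
        apply hloc
        intro j hj
        have hji : j ≠ i := fun h => hik (h ▸ hj)
        rw [Function.update_of_ne hji]
      rw [this]
    have hγ' : ∀ x : A i,
        |h x - (1 / (Fintype.card (A i) : ℝ)) * ∑ a : A i, h a| ≤ γ := by
      intro x
      have hc := hγ i (Function.update σ i x)
      have hcalc : ∑ k ∈ Kat nbr i, θ k * locg A f i k (Function.update σ i x)
          = h x - (1 / (Fintype.card (A i) : ℝ)) * ∑ a : A i, h a := by
        simp only [locg, Function.update_idem, mul_sub, hh]
        rw [Finset.sum_sub_distrib]
        congr 1
        simp only [Finset.mul_sum]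
        rw [Finset.sum_comm]
        exact Finset.sum_congr rfl fun a _ => Finset.sum_congr rfl fun k _ => by ring
      rwa [hcalc] at hc
    have hab : h a - h b ≤ 2 * γ := by
      have h1 := (abs_le.mp (hγ' a)).2
      have h2 := (abs_le.mp (hγ' b)).1
      linarith
    have : ∑ k, θ k * f k (Function.update σ i a)
        ≤ 2 * γ + ∑ k, θ k * f k (Function.update σ i b) := by
      rw [hsplit a, hsplit b]; linarith
    calc w (Function.update σ i a) ≤ Real.exp (2 * γ + ∑ k, θ k * f k (Function.update σ i b)) :=
          Real.exp_le_exp.mpr this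
      _ = Real.exp (2 * γ) * w (Function.update σ i b) := Real.exp_add _ _
  -- single-site step for weights
  have site : ∀ (i : V) (T : Finset V), i ∉ T →
      Real.exp (-(2 * γ)) / (Fintype.card (A i) : ℝ) *
        ∑ σ ∈ univ.filter (fun σ : ∀ j, A j => ∀ j ∈ T, σ j = σbar j), w σ
      ≤ ∑ σ ∈ univ.filter (fun σ : ∀ j, A j => ∀ j ∈ insert i T, σ j = σbar j), w σ := by
    intro i T hiT
    have key : ∑ σ ∈ univ.filter (fun σ : ∀ j, A j => ∀ j ∈ T, σ j = σbar j), w σ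
        = ∑ σ ∈ univ.filter (fun σ : ∀ j, A j => ∀ j ∈ insert i T, σ j = σbar j),
            ∑ a : A i, w (Function.update σ i a) := by
      rw [← Finset.sum_product' _ _ (fun σ a => w (Function.update σ i a))]
      refine Finset.sum_nbij' (fun τ => (Function.update τ i (σbar i), τ i))
        (fun p => Function.update p.1 i p.2) ?_ ?_ ?_ ?_ ?_
      · intro τ hτ
        simp only [Finset.mem_filter, Finset.mem_univ, true_and] at hτ ⊢
        rw [Finset.mem_product]
        constructor
        · simp only [Finset.mem_filter, Finset.mem_univ, true_and]
          intro j hj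
          rcases Finset.mem_insert.mp hj with rfl | hj'
          · simp
          · have hji : j ≠ i := fun h => hiT (h ▸ hj')
            rw [Function.update_of_ne hji]
            exact hτ j hj'
        · exact Finset.mem_univ _
      · intro p hp
        rw [Finset.mem_product] at hp
        simp only [Finset.mem_filter, Finset.mem_univ, true_and] at hp ⊢
        intro j hj
        have hji : j ≠ i := fun h => hiT (h ▸ hj)
        rw [Function.update_of_ne hji]
        exact hp.1 j (Finset.mem_insert_of_mem hj)
      · intro τ _
        simp [Function.update_idem, Function.update_eq_self]
      · intro p hp
        obtain ⟨p1, p2⟩ := p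
        rw [Finset.mem_product] at hp
        simp only [Finset.mem_filter, Finset.mem_univ, true_and] at hp
        have hpi : p1 i = σbar i := hp.1 i (Finset.mem_insert_self i T)
        simp [Function.update_idem, ← hpi, Function.update_eq_self]
      · intro τ _
        simp [Function.update_eq_self]
    have cardpos : (0:ℝ) < (Fintype.card (A i) : ℝ) := by
      exact_mod_cast Fintype.card_pos
    have step : ∑ σ ∈ univ.filter (fun σ : ∀ j, A j => ∀ j ∈ T, σ j = σbar j), w σ
        ≤ (Fintype.card (A i) : ℝ) * Real.exp (2 * γ) *
          ∑ σ ∈ univ.filter (fun σ : ∀ j, A j => ∀ j ∈ insert i T, σ j = σbar j), w σ := by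
      rw [key, Finset.mul_sum]
      refine Finset.sum_le_sum fun σ hσ => ?_
      simp only [Finset.mem_filter, Finset.mem_univ, true_and] at hσ
      have hσi : σ i = σbar i := hσ i (Finset.mem_insert_self i T)
      have hσeq : Function.update σ i (σbar i) = σ := by
        rw [← hσi, Function.update_eq_self]
      calc ∑ a : A i, w (Function.update σ i a)
          ≤ ∑ _a : A i, Real.exp (2 * γ) * w σ := by
            refine Finset.sum_le_sum fun a _ => ?_
            have := point i σ a (σbar i)
            rwa [hσeq] at this
        _ = (Fintype.card (A i) : ℝ) * Real.exp (2 * γ) * w σ := by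
            rw [Finset.sum_const, nsmul_eq_mul, Finset.card_univ]; ring
    have hexp : Real.exp (-(2 * γ)) * Real.exp (2 * γ) = 1 := by
      rw [← Real.exp_add]; simp
    have := mul_le_mul_of_nonneg_left step
      (le_of_lt (div_pos (Real.exp_pos (-(2 * γ))) cardpos))
    calc Real.exp (-(2 * γ)) / (Fintype.card (A i) : ℝ) *
          ∑ σ ∈ univ.filter (fun σ : ∀ j, A j => ∀ j ∈ T, σ j = σbar j), w σ
        ≤ Real.exp (-(2 * γ)) / (Fintype.card (A i) : ℝ) *
          ((Fintype.card (A i) : ℝ) * Real.exp (2 * γ) *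
            ∑ σ ∈ univ.filter (fun σ : ∀ j, A j => ∀ j ∈ insert i T, σ j = σbar j), w σ) := this
      _ = ∑ σ ∈ univ.filter (fun σ : ∀ j, A j => ∀ j ∈ insert i T, σ j = σbar j), w σ := by
          have hcne : (Fintype.card (A i) : ℝ) ≠ 0 := ne_of_gt cardpos
          rw [show Real.exp (-(2 * γ)) / (Fintype.card (A i) : ℝ) *
              ((Fintype.card (A i) : ℝ) * Real.exp (2 * γ) *
              ∑ σ ∈ univ.filter (fun σ : ∀ j, A j => ∀ j ∈ insert i T, σ j = σbar j), w σ)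
              = (Real.exp (-(2 * γ)) * Real.exp (2 * γ)) *
              (∑ σ ∈ univ.filter (fun σ : ∀ j, A j => ∀ j ∈ insert i T, σ j = σbar j), w σ) *
              ((Fintype.card (A i) : ℝ) / (Fintype.card (A i) : ℝ)) from by ring,
            div_self hcne, hexp, one_mul, mul_one]
  -- induction
  have main : ∀ (S : Finset V), Disjoint S SB →
      (∏ i ∈ S, Real.exp (-(2 * γ)) / (Fintype.card (A i) : ℝ)) *
        ∑ σ ∈ univ.filter (fun σ : ∀ j, A j => ∀ j ∈ SB, σ j = σbar j), w σ
      ≤ ∑ σ ∈ univ.filter (fun σ : ∀ j, A j => ∀ j ∈ S ∪ SB, σ j = σbar j), w σ := by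
    intro S
    induction S using Finset.induction_on with
    | empty => intro _; simp
    | insert i s hnot ih =>
      intro hdisj
      have hdis' : Disjoint s SB := Finset.disjoint_insert_left.mp hdisj |>.2
      have hiB : i ∉ SB := Finset.disjoint_insert_left.mp hdisj |>.1
      have hiU : i ∉ s ∪ SB := by
        simp only [Finset.mem_union]; tauto
      have hins : insert i s ∪ SB = insert i (s ∪ SB) := by
        rw [Finset.insert_union]
      rw [hins, Finset.prod_insert hnot]
      have ci_nonneg : 0 ≤ Real.exp (-(2 * γ)) / (Fintype.card (A i) : ℝ) := by
        positivity
      calc Real.exp (-(2 * γ)) / (Fintype.card (A i) : ℝ) *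
            (∏ j ∈ s, Real.exp (-(2 * γ)) / (Fintype.card (A j) : ℝ)) *
            ∑ σ ∈ univ.filter (fun σ : ∀ j, A j => ∀ j ∈ SB, σ j = σbar j), w σ
          = Real.exp (-(2 * γ)) / (Fintype.card (A i) : ℝ) *
            ((∏ j ∈ s, Real.exp (-(2 * γ)) / (Fintype.card (A j) : ℝ)) *
            ∑ σ ∈ univ.filter (fun σ : ∀ j, A j => ∀ j ∈ SB, σ j = σbar j), w σ) := by ring
        _ ≤ Real.exp (-(2 * γ)) / (Fintype.card (A i) : ℝ) *
            ∑ σ ∈ univ.filter (fun σ : ∀ j, A j => ∀ j ∈ s ∪ SB, σ j = σbar j), w σ :=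
            mul_le_mul_of_nonneg_left (ih hdis') ci_nonneg
        _ ≤ ∑ σ ∈ univ.filter (fun σ : ∀ j, A j => ∀ j ∈ insert i (s ∪ SB), σ j = σbar j), w σ :=
            site i (s ∪ SB) hiU
  -- conclude
  have hZpos : (0:ℝ) < ∑ τ : ∀ i, A i, Real.exp (∑ k, θ k * f k τ) :=
    Finset.sum_pos (fun τ _ => Real.exp_pos _) Finset.univ_nonempty
  have hμsum : ∀ (P : (∀ i, A i) → Prop) [DecidablePred P],
      ∑ σ ∈ univ.filter P, μ σ
        = (∑ σ ∈ univ.filter P, w σ) / ∑ τ : ∀ i, A i, Real.exp (∑ k, θ k * f k τ) := by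
    intro P _
    rw [Finset.sum_div]
    exact Finset.sum_congr rfl fun σ _ => hμ σ
  rw [ge_iff_le, hμsum, hμsum, ← mul_div_assoc]
  exact (div_le_div_iff_of_pos_right hZpos).mpr (main SA hdis)
end

section
/- For every vertex u ∈ V and every factor k ∈ K_u, the expectation under the Gibbs distribution μ of the random variable g_{uk}(σ) · exp(−Σ_{l∈K_u} θ*_l g_{ul}(σ)) is zero; that is, Σ_σ μ(σ) g_{uk}(σ) exp(−Σ_{l∈K_u} θ*_l g_{ul}(σ)) = 0. -/
open Finset

/-- Screening property (Lemma 3): for every `u ∈ V` and `k ∈ K_u`, the expectation under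
the Gibbs distribution of `g_{uk}(σ) · exp(−Σ_{l∈K_u} θ*_l g_{ul}(σ))` is zero. -/
theorem screening_property
    {V : Type*} [Fintype V] [DecidableEq V]
    (A : V → Type*) [∀ i, Fintype (A i)] [∀ i, Nonempty (A i)]
    {K : Type*} [Fintype K]
    (nbr : K → Finset V) (f : K → (∀ i, A i) → ℝ)
    (hloc : ∀ k (σ τ : ∀ i, A i), (∀ i ∈ nbr k, σ i = τ i) → f k σ = f k τ)
    (θ : K → ℝ)
    (μ : (∀ i, A i) → ℝ)
    (hμ : ∀ σ, μ σ =
      Real.exp (∑ k, θ k * f k σ) / ∑ τ : ∀ i, A i, Real.exp (∑ k, θ k * f k τ))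
    (u : V) (k : K) (hk : u ∈ nbr k) :
    ∑ σ : ∀ i, A i, μ σ * (locg A f u k σ *
      Real.exp (-∑ l ∈ Kat nbr u, θ l * locg A f u l σ)) = 0 := by
  classical
  set c : ℝ := (Fintype.card (A u) : ℝ) with hc
  have hc0 : c ≠ 0 := Nat.cast_ne_zero.mpr Fintype.card_ne_zero
  set Z : ℝ := ∑ τ : ∀ i, A i, Real.exp (∑ k, θ k * f k τ) with hZ
  -- sum of locg over updates is zero
  have hlocsum : ∀ (l : K) (σ : ∀ i, A i),
      ∑ b : A u, locg A f u l (Function.update σ u b) = 0 := by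
    intro l σ
    unfold locg
    simp only [Function.update_idem]
    rw [Finset.sum_sub_distrib, Finset.sum_const, card_univ, nsmul_eq_mul]
    field_simp
    ring
  -- the "environment" energy, independent of coordinate u
  set E : (∀ i, A i) → ℝ := fun σ =>
    (∑ l ∈ (Kat nbr u)ᶜ, θ l * f l σ) +
      ∑ l ∈ Kat nbr u, θ l * ((1 / c) * ∑ a : A u, f l (Function.update σ u a)) with hE
  have hEeq : ∀ σ : ∀ i, A i,
      (∑ l, θ l * f l σ) - ∑ l ∈ Kat nbr u, θ l * locg A f u l σ = E σ := by
    intro σ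
    have hsplit : (∑ l, θ l * f l σ)
        = (∑ l ∈ Kat nbr u, θ l * f l σ) + ∑ l ∈ (Kat nbr u)ᶜ, θ l * f l σ :=
      (Finset.sum_add_sum_compl _ _).symm
    rw [hsplit]
    simp only [hE, locg, mul_sub, Finset.sum_sub_distrib, ← hc]
    ring
  have hEupd : ∀ (σ : ∀ i, A i) (b : A u), E (Function.update σ u b) = E σ := by
    intro σ b
    rw [hE]
    simp only [Function.update_idem]
    congr 1
    refine Finset.sum_congr rfl fun l hl => ?_
    have hu : u ∉ nbr l := by
      simpa [Kat] using hl
    congr 1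
    refine hloc l _ _ fun i hi => Function.update_of_ne ?_ _ _
    rintro rfl; exact hu hi
  -- rewrite the summand
  have hsummand : ∀ σ : ∀ i, A i,
      μ σ * (locg A f u k σ * Real.exp (-∑ l ∈ Kat nbr u, θ l * locg A f u l σ))
        = locg A f u k σ * (Real.exp (E σ) / Z) := by
    intro σ
    rw [hμ σ, ← hEeq σ, sub_eq_add_neg, Real.exp_add]
    ring
  simp only [hsummand]
  -- reindex the sum using the split at u
  set e := Equiv.piSplitAt u A with he
  have hbase : ∀ (a a' : A u) (ρ : ∀ j : {j // j ≠ u}, A j),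
      e.symm (a, ρ) = Function.update (e.symm (a', ρ)) u a := by
    intro a a' ρ
    funext j
    rcases eq_or_ne j u with h | h
    · subst h; simp [he, Equiv.piSplitAt_symm_apply]
    · simp [he, Equiv.piSplitAt_symm_apply, Function.update_of_ne h, h]
  rw [← Equiv.sum_comp e.symm, Fintype.sum_prod_type, Finset.sum_comm]
  refine Finset.sum_eq_zero fun ρ _ => ?_
  obtain ⟨a₀⟩ : Nonempty (A u) := inferInstance
  obtain ⟨base, hb⟩ : ∃ b, b = e.symm (a₀, ρ) := ⟨_, rfl⟩
  have hthis : ∀ a : A u, e.symm (a, ρ) = Function.update base u a := by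
    intro a; rw [hb]; exact hbase a a₀ ρ
  simp only [hthis, hEupd]
  rw [← Finset.sum_mul, hlocsum, zero_mul]
end

section
/- Fix a node u ∈ V and n sample configurations σ^(1),…,σ^(n) ∈ Π_{i∈V} A_i. Assume max_σ |g_{uk}(σ)| ≤ 1 for all k ∈ K_u and |Σ_{k∈K_u} θ*_k g_{uk}(σ^(t))| ≤ γ for every t. Define the empirical correlation matrix Ĥ_{k₁k₂} = (1/n) Σ_{t=1}^n g_{uk₁}(σ^(t)) g_{uk₂}(σ^(t)) and define δS_n(Δ, θ*) = (1/n) Σ_{t=1}^n exp(−Σ_{k∈K_u} θ*_k g_{uk}(σ^(t))) · [exp(−Σ_{k∈K_u} Δ_k g_{uk}(σ^(t))) − 1 + Σ_{k∈K_u} Δ_k g_{uk}(σ^(t))]. Then for every Δ : K_u → ℝ, δS_n(Δ, θ*) ≥ exp(−γ) · (Σ_{k₁,k₂∈K_u} Δ_{k₁} Ĥ_{k₁k₂} Δ_{k₂}) / (2 + ‖Δ‖₁), where ‖Δ‖₁ = Σ_{k∈K_u} |Δ_k|. -/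
open Finset

lemma aux_exp_lower (x : ℝ) (hx : 0 ≤ x) : 2 - x ≤ (2 + x) * Real.exp (-x) := by
  set F : ℝ → ℝ := fun y => (2 + y) * Real.exp (-y) + y with hF
  have hd : ∀ y : ℝ, HasDerivAt F (1 - (1 + y) * Real.exp (-y)) y := by
    intro y
    have h1 : HasDerivAt (fun y : ℝ => Real.exp (-y)) (-Real.exp (-y)) y := by
      simpa [Function.comp_def] using (Real.hasDerivAt_exp (-y)).comp y (hasDerivAt_neg y)
    have h2 : HasDerivAt (fun y : ℝ => 2 + y) 1 y := (hasDerivAt_id y).const_add 2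
    have := (h2.mul h1).add (hasDerivAt_id y)
    exact this.congr_deriv (by ring)
  have mono : MonotoneOn F (Set.Ici 0) := by
    apply monotoneOn_of_deriv_nonneg (convex_Ici 0)
    · exact (Continuous.continuousOn (by continuity))
    · intro y _; exact (hd y).differentiableAt.differentiableWithinAt
    · intro y hy
      rw [(hd y).deriv]
      have hy0 : (0:ℝ) ≤ y := le_of_lt (by simpa using hy)
      have h3 : (1 + y) * Real.exp (-y) ≤ 1 := by
        have := Real.add_one_le_exp y
        rw [Real.exp_neg, mul_inv_le_iff₀ (Real.exp_pos y), one_mul]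
        linarith
      linarith
  have h0 : F 0 ≤ F x := mono (Set.mem_Ici.2 le_rfl) (Set.mem_Ici.2 hx) hx
  simp [hF] at h0
  linarith

lemma aux_bracket (x : ℝ) : x ^ 2 / (2 + |x|) ≤ Real.exp (-x) - 1 + x := by
  rcases le_or_gt 0 x with hx | hx
  · rw [abs_of_nonneg hx, div_le_iff₀ (by linarith)]
    nlinarith [aux_exp_lower x hx]
  · rw [abs_of_neg hx]
    have hq := Real.quadratic_le_exp_of_nonneg (neg_nonneg.2 hx.le)
    have h1 : x ^ 2 / (2 - x) ≤ x ^ 2 / 2 :=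
      div_le_div_of_nonneg_left (sq_nonneg x) (by norm_num) (by linarith)
    have h2 : (-x) ^ 2 = x ^ 2 := by ring
    rw [h2] at hq
    calc x ^ 2 / (2 + -x) = x ^ 2 / (2 - x) := by ring_nf
      _ ≤ x ^ 2 / 2 := h1
      _ ≤ Real.exp (-x) - 1 + x := by linarith


/-- Lemma 6 (deterministic lower bound on the Taylor residual of the GISO): if
`|g_{uk}| ≤ 1` for `k ∈ K_u` and `|Σ_{k∈K_u} θ*_k g_{uk}(σ^{(t)})| ≤ γ` for every sample,
then `δS_n(Δ, θ*) ≥ exp(−γ) · ΔᵀĤΔ / (2 + ‖Δ‖₁)` for every `Δ`. -/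
theorem giso_taylor_residual_bound
    {V : Type*} [Fintype V] [DecidableEq V]
    (A : V → Type*) [∀ i, Fintype (A i)] [∀ i, Nonempty (A i)]
    {K : Type*} [Fintype K]
    (nbr : K → Finset V) (f : K → (∀ i, A i) → ℝ)
    (θ : K → ℝ) (γ : ℝ) (u : V)
    (n : ℕ) (s : Fin n → ∀ i, A i)
    (hg : ∀ k ∈ Kat nbr u, ∀ σ : ∀ i, A i, |locg A f u k σ| ≤ 1)
    (hγ : ∀ t : Fin n, |∑ k ∈ Kat nbr u, θ k * locg A f u k (s t)| ≤ γ)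
    (Δ : K → ℝ) :
    (1 / n : ℝ) * ∑ t : Fin n,
        Real.exp (-∑ k ∈ Kat nbr u, θ k * locg A f u k (s t)) *
          (Real.exp (-∑ k ∈ Kat nbr u, Δ k * locg A f u k (s t)) - 1 +
            ∑ k ∈ Kat nbr u, Δ k * locg A f u k (s t)) ≥
      Real.exp (-γ) *
        (∑ k₁ ∈ Kat nbr u, ∑ k₂ ∈ Kat nbr u,
          Δ k₁ * ((1 / n : ℝ) * ∑ t : Fin n, locg A f u k₁ (s t) * locg A f u k₂ (s t)) * Δ k₂) /
        (2 + ∑ k ∈ Kat nbr u, |Δ k|) := by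
  set S := Kat nbr u with hS
  set g : K → (Fin n) → ℝ := fun k t => locg A f u k (s t) with hgdef
  set x : Fin n → ℝ := fun t => ∑ k ∈ S, Δ k * g k t with hx
  set L : ℝ := ∑ k ∈ S, |Δ k| with hL
  have hLnn : 0 ≤ L := Finset.sum_nonneg fun k _ => abs_nonneg _
  have hLpos : 0 < 2 + L := by linarith
  -- |x t| ≤ L
  have hxL : ∀ t, |x t| ≤ L := by
    intro t
    calc |x t| ≤ ∑ k ∈ S, |Δ k * g k t| := Finset.abs_sum_le_sum_abs _ _
      _ ≤ L := by
        apply Finset.sum_le_sum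
        intro k hk
        rw [abs_mul]
        calc |Δ k| * |g k t| ≤ |Δ k| * 1 :=
              mul_le_mul_of_nonneg_left (hg k hk (s t)) (abs_nonneg _)
          _ = |Δ k| := mul_one _
  -- rewrite the quadratic form
  have hQ : (∑ k₁ ∈ S, ∑ k₂ ∈ S,
      Δ k₁ * ((1 / n : ℝ) * ∑ t : Fin n, g k₁ t * g k₂ t) * Δ k₂)
      = (1 / n : ℝ) * ∑ t : Fin n, (x t) ^ 2 := by
    calc (∑ k₁ ∈ S, ∑ k₂ ∈ S,
        Δ k₁ * ((1 / n : ℝ) * ∑ t : Fin n, g k₁ t * g k₂ t) * Δ k₂)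
        = ∑ k₁ ∈ S, ∑ k₂ ∈ S, ∑ t : Fin n,
            (1 / n : ℝ) * (Δ k₁ * g k₁ t * (Δ k₂ * g k₂ t)) := by
          refine Finset.sum_congr rfl fun k₁ _ => Finset.sum_congr rfl fun k₂ _ => ?_
          rw [Finset.mul_sum, Finset.mul_sum, Finset.sum_mul]
          exact Finset.sum_congr rfl fun t _ => by ring
      _ = ∑ k₁ ∈ S, ∑ t : Fin n, ∑ k₂ ∈ S,
            (1 / n : ℝ) * (Δ k₁ * g k₁ t * (Δ k₂ * g k₂ t)) :=
          Finset.sum_congr rfl fun k₁ _ => Finset.sum_comm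
      _ = ∑ t : Fin n, ∑ k₁ ∈ S, ∑ k₂ ∈ S,
            (1 / n : ℝ) * (Δ k₁ * g k₁ t * (Δ k₂ * g k₂ t)) :=
          Finset.sum_comm
      _ = (1 / n : ℝ) * ∑ t : Fin n, (x t) ^ 2 := by
          rw [Finset.mul_sum]
          refine Finset.sum_congr rfl fun t _ => ?_
          simp only [hx]
          rw [pow_two, Finset.sum_mul_sum, Finset.mul_sum]
          refine Finset.sum_congr rfl fun k₁ _ => ?_
          rw [Finset.mul_sum]
  rw [hQ]
  -- termwise bound
  have hterm : ∀ t : Fin n,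
      Real.exp (-γ) * ((x t) ^ 2 / (2 + L)) ≤
        Real.exp (-(∑ k ∈ S, θ k * g k t)) *
          (Real.exp (-(x t)) - 1 + x t) := by
    intro t
    have hexpγ : Real.exp (-γ) ≤ Real.exp (-(∑ k ∈ S, θ k * g k t)) := by
      apply Real.exp_le_exp.2
      have := hγ t
      rw [abs_le] at this
      linarith [this.1]
    have hbr : (x t) ^ 2 / (2 + L) ≤ Real.exp (-(x t)) - 1 + x t := by
      calc (x t) ^ 2 / (2 + L) ≤ (x t) ^ 2 / (2 + |x t|) := by
            apply div_le_div_of_nonneg_left (sq_nonneg _) (by positivity)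
            linarith [hxL t]
        _ ≤ Real.exp (-(x t)) - 1 + x t := aux_bracket (x t)
    have hbrnn : 0 ≤ (x t) ^ 2 / (2 + L) := by positivity
    calc Real.exp (-γ) * ((x t) ^ 2 / (2 + L))
        ≤ Real.exp (-(∑ k ∈ S, θ k * g k t)) * ((x t) ^ 2 / (2 + L)) :=
          mul_le_mul_of_nonneg_right hexpγ hbrnn
      _ ≤ Real.exp (-(∑ k ∈ S, θ k * g k t)) * (Real.exp (-(x t)) - 1 + x t) :=
          mul_le_mul_of_nonneg_left hbr (Real.exp_nonneg _)
  -- combine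
  have hn : (0:ℝ) ≤ 1 / n := by positivity
  calc Real.exp (-γ) * ((1 / n : ℝ) * ∑ t : Fin n, (x t) ^ 2) / (2 + L)
      = (1 / n : ℝ) * ∑ t : Fin n, Real.exp (-γ) * ((x t) ^ 2 / (2 + L)) := by
        simp_rw [mul_div_assoc, Finset.mul_sum, Finset.sum_div, Finset.mul_sum]
        exact Finset.sum_congr rfl fun t _ => by ring
    _ ≤ (1 / n : ℝ) * ∑ t : Fin n,
          Real.exp (-(∑ k ∈ S, θ k * g k t)) * (Real.exp (-(x t)) - 1 + x t) :=
        mul_le_mul_of_nonneg_left (Finset.sum_le_sum fun t _ => hterm t) hn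
end

section
/- Fix a node u ∈ V and assume max_σ |g_{uk}(σ)| ≤ 1 for all k ∈ K_u, and let γ be the maximum interaction strength. Let 𝐊_u = |K_u|, let ε₁ > 0, δ₁ ∈ (0,1), and let n > (2 exp(2γ)/ε₁²) · log(2𝐊_u/δ₁). Draw σ^(1),…,σ^(n) i.i.d. from μ. Then with probability at least 1 − δ₁ under the n-fold product measure μ^⊗n, for every k ∈ K_u: |(1/n) Σ_{t=1}^n g_{uk}(σ^(t)) exp(−Σ_{l∈K_u} θ*_l g_{ul}(σ^(t)))| < ε₁. -/
open Finset

section Aux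
variable {Ω : Type*} [Fintype Ω]

lemma sum_prod_pow (q : Ω → ℝ) (n : ℕ) :
    ∑ s : Fin n → Ω, ∏ t, q (s t) = (∑ σ, q σ) ^ n := by
  rw [← Fintype.prod_sum (fun _ : Fin n => fun σ => q σ)]
  simp

lemma hoeff_mgf (p X : Ω → ℝ) (hp : ∀ σ, 0 ≤ p σ) (hp1 : ∑ σ, p σ = 1)
    (B : ℝ) (hB : 0 < B) (hX : ∀ σ, |X σ| ≤ B)
    (hmean : ∑ σ, p σ * X σ = 0) (lam : ℝ) :
    ∑ σ, p σ * Real.exp (lam * X σ) ≤ Real.exp (lam ^ 2 * B ^ 2 / 2) := by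
  have key : ∀ σ, Real.exp (lam * X σ) ≤
      Real.cosh (lam * B) + X σ / B * Real.sinh (lam * B) := by
    intro σ
    have h1 : -B ≤ X σ := (abs_le.1 (hX σ)).1
    have h2 : X σ ≤ B := (abs_le.1 (hX σ)).2
    have hs : 0 ≤ (B - X σ) / (2 * B) := div_nonneg (by linarith) (by linarith)
    have ht : 0 ≤ (B + X σ) / (2 * B) := div_nonneg (by linarith) (by linarith)
    have hst : (B - X σ) / (2 * B) + (B + X σ) / (2 * B) = 1 := by
      field_simp; ring
    have hc := convexOn_exp.2 (Set.mem_univ (-(lam * B))) (Set.mem_univ (lam * B))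
      hs ht hst
    simp only [smul_eq_mul] at hc
    have harg : (B - X σ) / (2 * B) * -(lam * B) + (B + X σ) / (2 * B) * (lam * B)
        = lam * X σ := by
      rw [div_mul_eq_mul_div, div_mul_eq_mul_div, ← add_div,
        div_eq_iff (by positivity : (2 * B) ≠ 0)]
      ring
    rw [harg] at hc
    refine le_of_le_of_eq hc ?_
    rw [Real.cosh_eq, Real.sinh_eq]
    field_simp
    ring
  calc ∑ σ, p σ * Real.exp (lam * X σ)
      ≤ ∑ σ, p σ * (Real.cosh (lam * B) + X σ / B * Real.sinh (lam * B)) := by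
        refine Finset.sum_le_sum fun σ _ => mul_le_mul_of_nonneg_left (key σ) (hp σ)
    _ = Real.cosh (lam * B) := by
        simp only [mul_add]
        rw [Finset.sum_add_distrib]
        have e1 : ∑ σ, p σ * Real.cosh (lam * B) = Real.cosh (lam * B) := by
          rw [← Finset.sum_mul, hp1, one_mul]
        have e2 : ∑ σ, p σ * (X σ / B * Real.sinh (lam * B)) = 0 := by
          have h : ∀ σ, p σ * (X σ / B * Real.sinh (lam * B))
              = p σ * X σ * (Real.sinh (lam * B) / B) := fun σ => by ring
          simp_rw [h, ← Finset.sum_mul, hmean, zero_mul]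
        rw [e1, e2, add_zero]
    _ ≤ Real.exp ((lam * B) ^ 2 / 2) := Real.cosh_le_exp_half_sq _
    _ = Real.exp (lam ^ 2 * B ^ 2 / 2) := by rw [mul_pow]

lemma chernoff (p X : Ω → ℝ) (hp : ∀ σ, 0 ≤ p σ) (n : ℕ) (c lam : ℝ) (hlam : 0 ≤ lam) :
    ∑ s : Fin n → Ω, (if c ≤ ∑ t, X (s t) then ∏ t, p (s t) else 0)
      ≤ Real.exp (-(lam * c)) * (∑ σ, p σ * Real.exp (lam * X σ)) ^ n := by
  rw [← sum_prod_pow (fun σ => p σ * Real.exp (lam * X σ)) n, Finset.mul_sum]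
  refine Finset.sum_le_sum fun s _ => ?_
  have hprod : 0 ≤ ∏ t, p (s t) := Finset.prod_nonneg fun t _ => hp (s t)
  have hrhs : ∏ t, (p (s t) * Real.exp (lam * X (s t)))
      = (∏ t, p (s t)) * Real.exp (lam * ∑ t, X (s t)) := by
    rw [Finset.prod_mul_distrib, Finset.mul_sum, Real.exp_sum]
  rw [hrhs]
  split_ifs with hc
  · have h1 : (1 : ℝ) ≤ Real.exp (-(lam * c)) * Real.exp (lam * ∑ t, X (s t)) := by
      rw [← Real.exp_add]
      refine Real.one_le_exp ?_
      nlinarith [mul_le_mul_of_nonneg_left hc hlam]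
    nlinarith
  · positivity
end Aux

lemma mean_zero
    {V : Type*} [Fintype V] [DecidableEq V]
    (A : V → Type*) [∀ i, Fintype (A i)] [∀ i, Nonempty (A i)]
    {K : Type*} [Fintype K]
    (nbr : K → Finset V) (f : K → (∀ i, A i) → ℝ)
    (hloc : ∀ k (σ τ : ∀ i, A i), (∀ i ∈ nbr k, σ i = τ i) → f k σ = f k τ)
    (θ : K → ℝ) (u : V) (k : K) :
    ∑ σ : ∀ i, A i, Real.exp (∑ l, θ l * f l σ) *
      (locg A f u k σ * Real.exp (-∑ l ∈ Kat nbr u, θ l * locg A f u l σ)) = 0 := by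
  classical
  set c : ℝ := (Fintype.card (A u) : ℝ) with hcdef
  have hc0 : 0 < c := by
    exact Nat.cast_pos.mpr (Fintype.card_pos (α := A u))
  set h : (∀ i, A i) → ℝ := fun σ =>
    ∑ l, θ l * f l σ - ∑ l ∈ Kat nbr u, θ l * locg A f u l σ with hhdef
  set F : (∀ i, A i) → ℝ := fun σ => locg A f u k σ * Real.exp (h σ) with hFdef
  have hgoal : ∀ σ, Real.exp (∑ l, θ l * f l σ) *
      (locg A f u k σ * Real.exp (-∑ l ∈ Kat nbr u, θ l * locg A f u l σ)) = F σ := by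
    intro σ
    simp only [hFdef, hhdef, Real.exp_sub]
    rw [Real.exp_neg]
    field_simp
  simp_rw [hgoal]
  -- representation of h
  have hrepr : ∀ τ : ∀ i, A i, h τ =
      ∑ l ∈ Kat nbr u, θ l * ((1 / c) * ∑ b : A u, f l (Function.update τ u b))
      + ∑ l ∈ (Kat nbr u)ᶜ, θ l * f l τ := by
    intro τ
    have hsplit : ∑ l, θ l * f l τ =
        ∑ l ∈ Kat nbr u, θ l * f l τ + ∑ l ∈ (Kat nbr u)ᶜ, θ l * f l τ :=
      (Finset.sum_add_sum_compl _ _).symm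
    have hdiff : ∑ l ∈ Kat nbr u, θ l * f l τ - ∑ l ∈ Kat nbr u, θ l * locg A f u l τ
        = ∑ l ∈ Kat nbr u, θ l * ((1 / c) * ∑ b : A u, f l (Function.update τ u b)) := by
      rw [← Finset.sum_sub_distrib]
      refine Finset.sum_congr rfl fun l _ => ?_
      simp only [locg, ← hcdef]
      ring
    simp only [hhdef]
    rw [hsplit]
    linarith [hdiff]
  -- invariance of h under update at u
  have hinv : ∀ (σ : ∀ i, A i) (a : A u), h (Function.update σ u a) = h σ := by
    intro σ a
    rw [hrepr, hrepr]
    congr 1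
    · refine Finset.sum_congr rfl fun l _ => ?_
      congr 2
      refine Finset.sum_congr rfl fun b _ => ?_
      rw [Function.update_idem]
    · refine Finset.sum_congr rfl fun l hl => ?_
      have hu : u ∉ nbr l := by
        simp only [Kat, Finset.mem_compl, Finset.mem_filter, Finset.mem_univ,
          true_and] at hl
        exact hl
      congr 1
      refine hloc l _ _ fun i hi => ?_
      exact Function.update_of_ne (fun he => hu (by rw [← he]; exact hi)) a σ
  -- centering: sum over a of locg at updates is 0
  have hcent : ∀ σ : ∀ i, A i, ∑ a : A u, locg A f u k (Function.update σ u a) = 0 := by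
    intro σ
    have : ∀ a : A u, locg A f u k (Function.update σ u a)
        = f k (Function.update σ u a)
          - (1 / c) * ∑ b : A u, f k (Function.update σ u b) := by
      intro a
      simp only [locg, ← hcdef]
      congr 1
      congr 1
      refine Finset.sum_congr rfl fun b _ => ?_
      rw [Function.update_idem]
    simp_rw [this]
    rw [Finset.sum_sub_distrib, Finset.sum_const, Finset.card_univ, nsmul_eq_mul,
      ← hcdef]
    field_simp
    ring
  -- the update-swap involution on (∀ i, A i) × A u
  have hmain : c * ∑ σ : ∀ i, A i, F σ = 0 := by
    have e1 : ∑ x : (∀ i, A i) × A u, F x.1 = c * ∑ σ : ∀ i, A i, F σ := by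
      rw [Fintype.sum_prod_type]
      simp [Finset.sum_const, Finset.card_univ, nsmul_eq_mul, hcdef, Finset.mul_sum,
        mul_comm]
    have hinvol : Function.Involutive
        (fun x : (∀ i, A i) × A u => (Function.update x.1 u x.2, x.1 u)) := by
      intro x
      simp [Function.update_idem, Function.update_self, Function.update_eq_self]
    have e2 : ∑ x : (∀ i, A i) × A u, F x.1
        = ∑ x : (∀ i, A i) × A u, F (Function.update x.1 u x.2) :=
      (Fintype.sum_bijective _ hinvol.bijective
        (fun x => F (Function.update x.1 u x.2)) (fun x => F x.1)
        (fun x => rfl)).symm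
    have e3 : ∑ x : (∀ i, A i) × A u, F (Function.update x.1 u x.2) = 0 := by
      rw [Fintype.sum_prod_type]
      refine Finset.sum_eq_zero fun σ _ => ?_
      have : ∀ a : A u, F (Function.update σ u a)
          = locg A f u k (Function.update σ u a) * Real.exp (h σ) := by
        intro a
        simp only [hFdef]
        rw [hinv]
      simp_rw [this]
      rw [← Finset.sum_mul, hcent, zero_mul]
    rw [← e1, e2, e3]
  have := mul_eq_zero.mp hmain
  rcases this with h1 | h2
  · exact absurd h1 hc0.ne'
  · exact h2

set_option maxHeartbeats 1000000 in
/-- Proposition 1 (gradient concentration for GRISE): if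
`n > (2 exp(2γ)/ε₁²) log(2𝐊_u/δ₁)`, then with probability at least `1 − δ₁` under the
`n`-fold product of the Gibbs measure, every component of the gradient of the GISO at
the true parameters is smaller than `ε₁` in absolute value. -/
theorem gradient_concentration
    {V : Type*} [Fintype V] [DecidableEq V]
    (A : V → Type*) [∀ i, Fintype (A i)] [∀ i, Nonempty (A i)]
    {K : Type*} [Fintype K]
    (nbr : K → Finset V) (f : K → (∀ i, A i) → ℝ)
    (hloc : ∀ k (σ τ : ∀ i, A i), (∀ i ∈ nbr k, σ i = τ i) → f k σ = f k τ)
    (θ : K → ℝ) (γ : ℝ)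
    (hγ : ∀ (i : V) (σ : ∀ j, A j), |∑ k ∈ Kat nbr i, θ k * locg A f i k σ| ≤ γ)
    (μ : (∀ i, A i) → ℝ)
    (hμ : ∀ σ, μ σ =
      Real.exp (∑ k, θ k * f k σ) / ∑ τ : ∀ i, A i, Real.exp (∑ k, θ k * f k τ))
    (u : V)
    (hg : ∀ k ∈ Kat nbr u, ∀ σ : ∀ i, A i, |locg A f u k σ| ≤ 1)
    (ε₁ δ₁ : ℝ) (hε : 0 < ε₁) (hδ : 0 < δ₁) (hδ' : δ₁ < 1)
    (n : ℕ)
    (hn : (n : ℝ) > 2 * Real.exp (2 * γ) / ε₁ ^ 2 *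
      Real.log (2 * ((Kat nbr u).card : ℝ) / δ₁)) :
    ∑ s : Fin n → ∀ i, A i,
      Set.indicator
        {s : Fin n → ∀ i, A i | ∀ k ∈ Kat nbr u,
          |(1 / n : ℝ) * ∑ t : Fin n, locg A f u k (s t) *
            Real.exp (-∑ l ∈ Kat nbr u, θ l * locg A f u l (s t))| < ε₁}
        (fun s => ∏ t : Fin n, μ (s t)) s ≥ 1 - δ₁ := by
  classical
  -- probability basics
  have hZpos : 0 < ∑ τ : (∀ i, A i), Real.exp (∑ k, θ k * f k τ) :=
    Finset.sum_pos (fun τ _ => Real.exp_pos _) Finset.univ_nonempty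
  have hp : ∀ σ : (∀ i, A i), 0 ≤ μ σ := fun σ => by
    rw [hμ]; positivity
  have hp1 : ∑ σ : (∀ i, A i), μ σ = 1 := by
    simp_rw [hμ]
    rw [← Finset.sum_div, div_self hZpos.ne']
  set P : (Fin n → ∀ i, A i) → ℝ := fun s => ∏ t, μ (s t) with hP
  have hPnn : ∀ s, 0 ≤ P s := fun s => Finset.prod_nonneg fun t _ => hp _
  have hPsum : ∑ s : Fin n → ∀ i, A i, P s = 1 := by
    simp only [hP]
    rw [sum_prod_pow μ n, hp1, one_pow]
  set S : Set (Fin n → ∀ i, A i) := {s : Fin n → ∀ i, A i | ∀ k ∈ Kat nbr u,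
      |(1 / n : ℝ) * ∑ t : Fin n, locg A f u k (s t) *
        Real.exp (-∑ l ∈ Kat nbr u, θ l * locg A f u l (s t))| < ε₁} with hSdef
  have hsplit : ∑ s : Fin n → ∀ i, A i, Set.indicator S P s
      = (∑ s : Fin n → ∀ i, A i, P s)
        - ∑ s : Fin n → ∀ i, A i, (if s ∈ S then 0 else P s) := by
    rw [← Finset.sum_sub_distrib]
    refine Finset.sum_congr rfl fun s _ => ?_
    rw [Set.indicator_apply]
    split_ifs <;> simp
  rw [hsplit, hPsum]
  have hbadgoal : ∑ s : Fin n → ∀ i, A i, (if s ∈ S then 0 else P s) ≤ δ₁ → _ := fun h =>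
    ge_iff_le.mpr (by linarith : 1 - δ₁ ≤ 1 - ∑ s : Fin n → ∀ i, A i, (if s ∈ S then 0 else P s))
  refine hbadgoal ?_
  -- the per-sample component functions
  set X : K → (∀ i, A i) → ℝ := fun k σ => locg A f u k σ *
      Real.exp (-∑ l ∈ Kat nbr u, θ l * locg A f u l σ) with hXdef
  by_cases hKe : Kat nbr u = ∅
  · have : ∀ s : Fin n → ∀ i, A i, s ∈ S := by
      intro s k hk
      rw [hKe] at hk
      exact absurd hk (Finset.notMem_empty k)
    simp only [this, if_true]
    simpa using hδ.le
  -- nonempty case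
  have hKc1 : (1 : ℝ) ≤ ((Kat nbr u).card : ℝ) := by
    have := Finset.card_pos.mpr (Finset.nonempty_of_ne_empty hKe)
    exact_mod_cast this
  set Kc : ℝ := ((Kat nbr u).card : ℝ) with hKcdef
  have hKcpos : 0 < Kc := lt_of_lt_of_le one_pos hKc1
  have hratpos : (1 : ℝ) < 2 * Kc / δ₁ := by
    rw [lt_div_iff₀ hδ]
    nlinarith
  have hLpos : 0 < Real.log (2 * Kc / δ₁) := Real.log_pos hratpos
  have hγ0 : 0 ≤ γ := le_trans (abs_nonneg _) (hγ u (Classical.arbitrary (∀ i, A i)))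
  set B : ℝ := Real.exp γ with hBdef
  have hB : 0 < B := Real.exp_pos γ
  have hB2 : B ^ 2 = Real.exp (2 * γ) := by
    rw [hBdef, ← Real.exp_nat_mul]
    norm_num
  have hnpos : (0 : ℝ) < n := by
    refine lt_of_le_of_lt ?_ hn
    positivity
  set lam : ℝ := ε₁ / B ^ 2 with hlamdef
  have hlam : 0 < lam := by positivity
  -- bounds on X
  have hXb : ∀ k ∈ Kat nbr u, ∀ σ : (∀ i, A i), |X k σ| ≤ B := by
    intro k hk σ
    rw [hXdef]
    simp only
    rw [abs_mul, Real.abs_exp]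
    have h1 : |locg A f u k σ| ≤ 1 := hg k hk σ
    have h2 : Real.exp (-∑ l ∈ Kat nbr u, θ l * locg A f u l σ) ≤ B := by
      rw [hBdef]
      refine Real.exp_le_exp.mpr ?_
      have := hγ u σ
      have := abs_le.1 this
      linarith [this.1]
    calc |locg A f u k σ| * Real.exp (-∑ l ∈ Kat nbr u, θ l * locg A f u l σ)
        ≤ 1 * B := mul_le_mul h1 h2 (Real.exp_pos _).le one_pos.le
      _ = B := one_mul B
  -- mean zero
  have hmean : ∀ k : K, ∑ σ : (∀ i, A i), μ σ * X k σ = 0 := by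
    intro k
    have hz := mean_zero A nbr f hloc θ u k
    have : ∀ σ : (∀ i, A i), μ σ * X k σ
        = Real.exp (∑ l, θ l * f l σ) *
          (locg A f u k σ * Real.exp (-∑ l ∈ Kat nbr u, θ l * locg A f u l σ))
            / ∑ τ : (∀ i, A i), Real.exp (∑ l, θ l * f l τ) := by
      intro σ
      rw [hμ, hXdef]
      ring
    simp_rw [this]
    rw [← Finset.sum_div, hz, zero_div]
  -- tail bound
  set T : ℝ := Real.exp (-((n : ℝ) * ε₁ ^ 2 / (2 * B ^ 2))) with hTdef
  have key : ∀ Y : (∀ i, A i) → ℝ, (∀ σ, |Y σ| ≤ B) → (∑ σ : (∀ i, A i), μ σ * Y σ = 0) →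
      ∑ s : Fin n → ∀ i, A i, (if (n : ℝ) * ε₁ ≤ ∑ t, Y (s t) then P s else 0) ≤ T := by
    intro Y hYb hY0
    have h1 := chernoff μ Y hp n ((n : ℝ) * ε₁) lam hlam.le
    have h2 := hoeff_mgf μ Y hp hp1 B hB hYb hY0 lam
    have hMnn : 0 ≤ ∑ σ : (∀ i, A i), μ σ * Real.exp (lam * Y σ) :=
      Finset.sum_nonneg fun σ _ => mul_nonneg (hp σ) (Real.exp_pos _).le
    calc ∑ s : Fin n → ∀ i, A i, (if (n : ℝ) * ε₁ ≤ ∑ t, Y (s t) then P s else 0)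
        ≤ Real.exp (-(lam * ((n : ℝ) * ε₁))) *
            (∑ σ : (∀ i, A i), μ σ * Real.exp (lam * Y σ)) ^ n := h1
      _ ≤ Real.exp (-(lam * ((n : ℝ) * ε₁))) *
            (Real.exp (lam ^ 2 * B ^ 2 / 2)) ^ n := by
          refine mul_le_mul_of_nonneg_left ?_ (Real.exp_pos _).le
          exact pow_le_pow_left₀ hMnn h2 n
      _ = T := by
          rw [← Real.exp_nat_mul, ← Real.exp_add, hTdef]
          congr 1
          rw [hlamdef]
          field_simp
          ring
  have hT : T < δ₁ / (2 * Kc) := by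
    rw [hTdef]
    have hexpL : (n : ℝ) * ε₁ ^ 2 / (2 * B ^ 2) > Real.log (2 * Kc / δ₁) := by
      rw [gt_iff_lt, lt_div_iff₀ (by positivity : (0:ℝ) < 2 * B ^ 2)]
      calc Real.log (2 * Kc / δ₁) * (2 * B ^ 2)
          = 2 * Real.exp (2 * γ) / ε₁ ^ 2 * Real.log (2 * Kc / δ₁) * ε₁ ^ 2 := by
            rw [hB2]; field_simp
        _ < (n : ℝ) * ε₁ ^ 2 := mul_lt_mul_of_pos_right hn (by positivity)
    calc Real.exp (-((n : ℝ) * ε₁ ^ 2 / (2 * B ^ 2)))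
        < Real.exp (-Real.log (2 * Kc / δ₁)) := by
          exact Real.exp_lt_exp.mpr (by linarith)
      _ = δ₁ / (2 * Kc) := by
          rw [Real.exp_neg, Real.exp_log (by positivity), inv_div]
  -- union bound
  have hbadle : ∀ s : Fin n → ∀ i, A i, (if s ∈ S then 0 else P s) ≤
      ∑ k ∈ Kat nbr u, ((if (n : ℝ) * ε₁ ≤ ∑ t, X k (s t) then P s else 0)
        + (if (n : ℝ) * ε₁ ≤ -∑ t, X k (s t) then P s else 0)) := by
    intro s
    by_cases hs : s ∈ S
    · simp only [hs, if_true]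
      refine Finset.sum_nonneg fun k _ => ?_
      refine add_nonneg ?_ ?_ <;> (split_ifs <;> simp [hPnn s])
    · simp only [hs, if_false]
      rw [hSdef] at hs
      simp only [Set.mem_setOf_eq, not_forall] at hs
      obtain ⟨k0, hk0, habs⟩ := hs
      have habs' : (n : ℝ) * ε₁ ≤ |∑ t, X k0 (s t)| := by
        push_neg at habs
        rw [abs_mul, abs_of_pos (by positivity : (0 : ℝ) < 1 / (n : ℝ))] at habs
        rw [hXdef]
        calc (n : ℝ) * ε₁ ≤ (n : ℝ) * (1 / (n : ℝ) *
            |∑ t, locg A f u k0 (s t) *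
              Real.exp (-∑ l ∈ Kat nbr u, θ l * locg A f u l (s t))|) :=
            mul_le_mul_of_nonneg_left habs hnpos.le
          _ = _ := by field_simp
      refine le_trans ?_ (Finset.single_le_sum (f := fun k =>
        (if (n : ℝ) * ε₁ ≤ ∑ t, X k (s t) then P s else 0)
        + (if (n : ℝ) * ε₁ ≤ -∑ t, X k (s t) then P s else 0))
        (fun k _ => add_nonneg (by split_ifs <;> simp [hPnn s])
          (by split_ifs <;> simp [hPnn s])) hk0)
      beta_reduce
      rcases le_abs.mp habs' with hpos | hneg
      · rw [if_pos hpos]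
        have : (0:ℝ) ≤ (if (n : ℝ) * ε₁ ≤ -∑ t, X k0 (s t) then P s else 0) := by
          split_ifs <;> simp [hPnn s]
        linarith
      · rw [if_pos hneg]
        have : (0:ℝ) ≤ (if (n : ℝ) * ε₁ ≤ ∑ t, X k0 (s t) then P s else 0) := by
          split_ifs <;> simp [hPnn s]
        linarith
  calc ∑ s : Fin n → ∀ i, A i, (if s ∈ S then 0 else P s)
      ≤ ∑ s : Fin n → ∀ i, A i, ∑ k ∈ Kat nbr u,
          ((if (n : ℝ) * ε₁ ≤ ∑ t, X k (s t) then P s else 0)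
          + (if (n : ℝ) * ε₁ ≤ -∑ t, X k (s t) then P s else 0)) :=
        Finset.sum_le_sum fun s _ => hbadle s
    _ = ∑ k ∈ Kat nbr u, ∑ s : Fin n → ∀ i, A i,
          ((if (n : ℝ) * ε₁ ≤ ∑ t, X k (s t) then P s else 0)
          + (if (n : ℝ) * ε₁ ≤ -∑ t, X k (s t) then P s else 0)) :=
        Finset.sum_comm
    _ ≤ ∑ k ∈ Kat nbr u, (T + T) := by
        refine Finset.sum_le_sum fun k hk => ?_
        rw [Finset.sum_add_distrib]
        have t1 : ∑ s : Fin n → ∀ i, A i, (if (n : ℝ) * ε₁ ≤ ∑ t, X k (s t) then P s else 0)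
            ≤ T := key (X k) (hXb k hk) (hmean k)
        have t2 : ∑ s : Fin n → ∀ i, A i, (if (n : ℝ) * ε₁ ≤ -∑ t, X k (s t) then P s else 0)
            ≤ T := by
          have := key (fun σ => -X k σ) (fun σ => by rw [abs_neg]; exact hXb k hk σ)
            (by simp_rw [mul_neg, Finset.sum_neg_distrib, hmean k, neg_zero])
          simpa [Finset.sum_neg_distrib] using this
        linarith
    _ = Kc * (2 * T) := by
        rw [Finset.sum_const, nsmul_eq_mul, hKcdef]
        ring
    _ ≤ δ₁ := by
        have := (lt_div_iff₀ (by positivity : (0:ℝ) < 2 * Kc)).mp hT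
        nlinarith
end

section
/- Fix a node u ∈ V, assume max_σ |g_{uk}(σ)| ≤ 1 for all k ∈ K_u, and let γ be the maximum interaction strength. Let 𝐊_u = |K_u|, let X_u ⊆ ℝ^{K_u}, T_u ⊆ K_u, and let N be a seminorm on ℝ^{T_u} such that there is ρ_u > 0 with E_μ[(Σ_{k∈K_u} x_k g_{uk}(σ))²] ≥ ρ_u N(x_{T_u})² for all x ∈ X_u, where x_{T_u} is the restriction of x to the coordinates in T_u. Let ε₂ > 0, δ₂ ∈ (0,1), and n > (2/ε₂²) log(2𝐊_u²/δ₂). Draw σ^(1),…,σ^(n) i.i.d. from μ and define δS_n(Δ, θ*) = (1/n) Σ_{t=1}^n exp(−Σ_{k∈K_u} θ*_k g_{uk}(σ^(t))) · [exp(−Σ_{k∈K_u} Δ_k g_{uk}(σ^(t))) − 1 + Σ_{k∈K_u} Δ_k g_{uk}(σ^(t))]. Then with probability at least 1 − δ₂ under μ^⊗n, for all Δ ∈ X_u: δS_n(Δ, θ*) ≥ exp(−γ) · (ρ_u N(Δ_{T_u})² − ε₂ ‖Δ‖₁²) / (2 + ‖Δ‖₁). -/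
open Finset

/-- Restriction of a vector `x : K → ℝ` to the coordinates in the finite set `T`. -/
def restr {K : Type*} (T : Finset K) (x : K → ℝ) : {k : K // k ∈ T} → ℝ :=
  fun j => x j.1

section Helpers

private lemma RSC_Fmono : Monotone (fun y : ℝ => (2 + y) * Real.exp (-y) + y - 2) := by
  have hd : ∀ y : ℝ, HasDerivAt (fun y : ℝ => (2 + y) * Real.exp (-y) + y - 2)
      (1 - (1 + y) * Real.exp (-y)) y := by
    intro y
    have h1 : HasDerivAt (fun y : ℝ => Real.exp (-y)) (-Real.exp (-y)) y := by
      simpa using (hasDerivAt_neg y).exp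
    have h2 : HasDerivAt (fun y : ℝ => (2 + y)) 1 y := by
      simpa using (hasDerivAt_id y).const_add 2
    have h3 := ((h2.mul h1).add (hasDerivAt_id y)).sub_const 2
    exact h3.congr_deriv (by ring)
  apply monotone_of_deriv_nonneg (fun y => (hd y).differentiableAt)
  intro y
  rw [(hd y).deriv]
  have h4 : (1 + y) * Real.exp (-y) ≤ Real.exp y * Real.exp (-y) :=
    mul_le_mul_of_nonneg_right (by linarith [Real.add_one_le_exp y]) (Real.exp_pos _).le
  rw [← Real.exp_add] at h4
  simp at h4
  linarith

private lemma RSC_key_ineq (y : ℝ) : y^2 / (2 + |y|) ≤ Real.exp (-y) - 1 + y := by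
  rcases le_or_gt 0 y with hy | hy
  · rw [abs_of_nonneg hy]
    have hF : 2 - y ≤ (2 + y) * Real.exp (-y) := by
      have := RSC_Fmono hy
      norm_num at this
      linarith
    have hpos : (0:ℝ) < 2 + y := by linarith
    rw [div_le_iff₀ hpos]
    have hexp : 0 ≤ Real.exp (-y) := (Real.exp_pos _).le
    nlinarith
  · rw [abs_of_neg hy]
    have hz : 0 ≤ -y := by linarith
    have hq := Real.quadratic_le_exp_of_nonneg hz
    have hpos : (0:ℝ) < 2 + -y := by linarith
    rw [div_le_iff₀ hpos]
    nlinarith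

private lemma RSC_upos {q : ℝ} (hq0 : 0 ≤ q) (hq1 : q ≤ 1) (h : ℝ) :
    0 < 1 - q + q * Real.exp h := by
  rcases eq_or_lt_of_le hq1 with h1 | h1
  · subst h1; simpa using Real.exp_pos h
  · have : 0 ≤ q * Real.exp h := mul_nonneg hq0 (Real.exp_pos h).le
    linarith

private lemma RSC_hasDerivAt_E {q : ℝ} (hq0 : 0 ≤ q) (hq1 : q ≤ 1) (h : ℝ) :
    HasDerivAt (fun h : ℝ => h/4 + q - q * Real.exp h / (1 - q + q * Real.exp h))
      (1/4 - (q * Real.exp h * (1 - q + q * Real.exp h) - (q * Real.exp h)^2) /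
        (1 - q + q * Real.exp h)^2) h := by
  have hu := RSC_upos hq0 hq1 h
  have hnum : HasDerivAt (fun h : ℝ => q * Real.exp h) (q * Real.exp h) h :=
    (Real.hasDerivAt_exp h).const_mul q
  have hden : HasDerivAt (fun h : ℝ => 1 - q + q * Real.exp h) (q * Real.exp h) h :=
    hnum.const_add (1 - q)
  have hdiv := hnum.div hden hu.ne'
  have hlin : HasDerivAt (fun h : ℝ => h/4 + q) (1/4) h := by
    simpa using ((hasDerivAt_id h).div_const 4).add_const q
  have := hlin.sub hdiv
  exact this.congr_deriv (by ring)

private lemma RSC_E_mono {q : ℝ} (hq0 : 0 ≤ q) (hq1 : q ≤ 1) :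
    Monotone (fun h : ℝ => h/4 + q - q * Real.exp h / (1 - q + q * Real.exp h)) := by
  apply monotone_of_deriv_nonneg (fun h => (RSC_hasDerivAt_E hq0 hq1 h).differentiableAt)
  intro h
  rw [(RSC_hasDerivAt_E hq0 hq1 h).deriv]
  have hu := RSC_upos hq0 hq1 h
  set u := 1 - q + q * Real.exp h with hu_def
  set v := q * Real.exp h with hv_def
  have h2 : (v * u - v^2) / u^2 ≤ 1/4 := by
    rw [div_le_iff₀ (by positivity)]
    nlinarith [sq_nonneg (u - 2*v), sq_nonneg u, sq_nonneg v, hu.le]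
  linarith

private lemma RSC_hasDerivAt_D {q : ℝ} (hq0 : 0 ≤ q) (hq1 : q ≤ 1) (h : ℝ) :
    HasDerivAt (fun h : ℝ => h^2/8 + h*q - Real.log (1 - q + q * Real.exp h))
      (h/4 + q - q * Real.exp h / (1 - q + q * Real.exp h)) h := by
  have hu := RSC_upos hq0 hq1 h
  have hden : HasDerivAt (fun h : ℝ => 1 - q + q * Real.exp h) (q * Real.exp h) h :=
    ((Real.hasDerivAt_exp h).const_mul q).const_add (1 - q)
  have hlog := (Real.hasDerivAt_log hu.ne').comp h hden
  have hsq : HasDerivAt (fun h : ℝ => h^2/8 + h*q) (h/4 + q) h := by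
    have := ((hasDerivAt_pow 2 h).div_const 8).add ((hasDerivAt_id h).mul_const q)
    exact this.congr_deriv (by ring)
  have := hsq.sub hlog
  exact this.congr_deriv (by field_simp)

private lemma RSC_D_nonneg {q : ℝ} (hq0 : 0 ≤ q) (hq1 : q ≤ 1) (h : ℝ) :
    0 ≤ h^2/8 + h*q - Real.log (1 - q + q * Real.exp h) := by
  set D := fun h : ℝ => h^2/8 + h*q - Real.log (1 - q + q * Real.exp h) with hD
  set E := fun h : ℝ => h/4 + q - q * Real.exp h / (1 - q + q * Real.exp h) with hE
  have hDE : ∀ h, HasDerivAt D (E h) h := RSC_hasDerivAt_D hq0 hq1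
  have hE0 : E 0 = 0 := by simp [hE]
  have hD0 : D 0 = 0 := by simp [hD]
  have hdiff : Differentiable ℝ D := fun h => (hDE h).differentiableAt
  rcases le_or_gt 0 h with hh | hh
  · have hmono : MonotoneOn D (Set.Ici 0) := by
      apply monotoneOn_of_deriv_nonneg (convex_Ici 0) hdiff.continuous.continuousOn
        hdiff.differentiableOn
      intro x hx
      rw [(hDE x).deriv]
      rw [interior_Ici] at hx
      calc (0:ℝ) = E 0 := hE0.symm
        _ ≤ E x := RSC_E_mono hq0 hq1 (le_of_lt hx)
    have := hmono (Set.self_mem_Ici) (Set.mem_Ici.2 hh) hh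
    rw [hD0] at this; exact this
  · have hanti : AntitoneOn D (Set.Iic 0) := by
      apply antitoneOn_of_deriv_nonpos (convex_Iic 0) hdiff.continuous.continuousOn
        hdiff.differentiableOn
      intro x hx
      rw [(hDE x).deriv]
      rw [interior_Iic] at hx
      calc E x ≤ E 0 := RSC_E_mono hq0 hq1 (le_of_lt hx)
        _ = 0 := hE0
    have := hanti (Set.mem_Iic.2 hh.le) (Set.self_mem_Iic) hh.le
    rw [hD0] at this; exact this

private lemma RSC_hoeffding_mgf {Ω : Type*} [Fintype Ω] (p W : Ω → ℝ) (hp : ∀ σ, 0 ≤ p σ)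
    (h1 : ∑ σ, p σ = 1) (M : ℝ)
    (hW : ∀ σ, -1 - M ≤ W σ ∧ W σ ≤ 1 - M)
    (h0 : ∑ σ, p σ * W σ = 0) (lam : ℝ) :
    ∑ σ, p σ * Real.exp (lam * W σ) ≤ Real.exp (lam^2 / 2) := by
  set a : ℝ := -1 - M with ha
  set b : ℝ := 1 - M with hb
  set q : ℝ := (1 + M)/2 with hq
  have hab : b = a + 2 := by rw [ha, hb]; ring
  have haW : ∀ σ, p σ * a ≤ p σ * W σ := fun σ =>
    mul_le_mul_of_nonneg_left (hW σ).1 (hp σ)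
  have hbW : ∀ σ, p σ * W σ ≤ p σ * b := fun σ =>
    mul_le_mul_of_nonneg_left (hW σ).2 (hp σ)
  have ha0 : a ≤ 0 := by
    have h := Finset.sum_le_sum (s := Finset.univ) (fun σ _ => haW σ)
    rw [h0, ← Finset.sum_mul, h1, one_mul] at h
    exact h
  have hb0 : 0 ≤ b := by
    have h := Finset.sum_le_sum (s := Finset.univ) (fun σ _ => hbW σ)
    rw [h0, ← Finset.sum_mul, h1, one_mul] at h
    exact h
  have hq0 : 0 ≤ q := by rw [hq]; rw [ha] at ha0; linarith
  have hq1 : q ≤ 1 := by rw [hq]; rw [hb] at hb0; linarith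
  have hconv : ∀ σ, Real.exp (lam * W σ) ≤
      (b - W σ)/2 * Real.exp (lam * a) + (W σ - a)/2 * Real.exp (lam * b) := by
    intro σ
    have hc1 : (0:ℝ) ≤ (b - W σ)/2 := by linarith [(hW σ).2]
    have hc2 : (0:ℝ) ≤ (W σ - a)/2 := by linarith [(hW σ).1]
    have hcs : (b - W σ)/2 + (W σ - a)/2 = 1 := by rw [hab]; ring
    have := convexOn_exp.2 (Set.mem_univ (lam * a)) (Set.mem_univ (lam * b)) hc1 hc2 hcs
    simp only [smul_eq_mul] at this
    have harg : (b - W σ)/2 * (lam * a) + (W σ - a)/2 * (lam * b) = lam * W σ := by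
      rw [hab]; ring
    rw [harg] at this
    exact this
  have hsum : ∑ σ, p σ * Real.exp (lam * W σ) ≤
      (1 - q) * Real.exp (lam * a) + q * Real.exp (lam * b) := by
    have hstep : ∀ σ, p σ * Real.exp (lam * W σ) ≤
        p σ * ((b - W σ)/2 * Real.exp (lam * a) + (W σ - a)/2 * Real.exp (lam * b)) :=
      fun σ => mul_le_mul_of_nonneg_left (hconv σ) (hp σ)
    calc ∑ σ, p σ * Real.exp (lam * W σ)
        ≤ ∑ σ, p σ * ((b - W σ)/2 * Real.exp (lam * a) + (W σ - a)/2 * Real.exp (lam * b)) :=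
          Finset.sum_le_sum (fun σ _ => hstep σ)
      _ = (∑ σ, p σ * (b - W σ)/2) * Real.exp (lam * a)
          + (∑ σ, p σ * (W σ - a)/2) * Real.exp (lam * b) := by
          rw [Finset.sum_mul, Finset.sum_mul, ← Finset.sum_add_distrib]
          congr 1; ext σ; ring
      _ = (1 - q) * Real.exp (lam * a) + q * Real.exp (lam * b) := by
          have e1 : ∑ σ, p σ * (b - W σ)/2 = (1 - q) := by
            have e : ∑ σ, p σ * (b - W σ)/2 = (b * ∑ σ, p σ - ∑ σ, p σ * W σ)/2 := by
              rw [Finset.mul_sum, ← Finset.sum_sub_distrib, ← Finset.sum_div]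
              congr 1; apply Finset.sum_congr rfl; intro σ _; ring
            rw [e, h0, h1, hq, hb]; ring
          have e2 : ∑ σ, p σ * (W σ - a)/2 = q := by
            have e : ∑ σ, p σ * (W σ - a)/2 = (∑ σ, p σ * W σ - a * ∑ σ, p σ)/2 := by
              rw [Finset.mul_sum, ← Finset.sum_sub_distrib, ← Finset.sum_div]
              congr 1; apply Finset.sum_congr rfl; intro σ _; ring
            rw [e, h0, h1, hq, ha]; ring
          rw [e1, e2]
  have hrw : (1 - q) * Real.exp (lam * a) + q * Real.exp (lam * b)
      = Real.exp (-(2*lam*q)) * (1 - q + q * Real.exp (2*lam)) := by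
    have haq : a = -2*q := by rw [ha, hq]; ring
    have hbq : b = 2 - 2*q := by rw [hb, hq]; ring
    rw [haq, hbq, show lam * (-2*q) = -(2*lam*q) by ring,
        show lam * (2 - 2*q) = 2*lam + -(2*lam*q) by ring, Real.exp_add]
    ring
  have hcore : Real.exp (-(2*lam*q)) * (1 - q + q * Real.exp (2*lam))
      ≤ Real.exp (lam^2/2) := by
    have hu := RSC_upos hq0 hq1 (2*lam)
    have hD := RSC_D_nonneg hq0 hq1 (2*lam)
    have hlog : Real.log (1 - q + q * Real.exp (2*lam)) ≤ (2*lam)^2/8 + (2*lam)*q := by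
      linarith
    have hle := (Real.log_le_iff_le_exp hu).1 hlog
    calc Real.exp (-(2*lam*q)) * (1 - q + q * Real.exp (2*lam))
        ≤ Real.exp (-(2*lam*q)) * Real.exp ((2*lam)^2/8 + (2*lam)*q) :=
          mul_le_mul_of_nonneg_left hle (Real.exp_pos _).le
      _ = Real.exp (lam^2/2) := by rw [← Real.exp_add]; congr 1; ring
  linarith [hrw ▸ hsum]

private lemma RSC_chernoff_tail {Ω : Type*} [Fintype Ω] (p Z : Ω → ℝ) (hp : ∀ σ, 0 ≤ p σ)
    (h1 : ∑ σ, p σ = 1) (hZ : ∀ σ, |Z σ| ≤ 1) (M : ℝ) (hM : ∑ σ, p σ * Z σ = M)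
    (ε : ℝ) (hε : 0 < ε) (n : ℕ) (hn : 0 < n) :
    ∑ s : Fin n → Ω, Set.indicator {s : Fin n → Ω | (1/n : ℝ) * ∑ t, Z (s t) - M > ε}
      (fun s => ∏ t, p (s t)) s ≤ Real.exp (-(n:ℝ) * ε^2 / 2) := by
  set W : Ω → ℝ := fun σ => Z σ - M with hW_def
  have hW0 : ∑ σ, p σ * W σ = 0 := by
    simp only [hW_def, mul_sub]
    rw [Finset.sum_sub_distrib, hM, ← Finset.sum_mul, h1]
    ring
  have hWb : ∀ σ, -1 - M ≤ W σ ∧ W σ ≤ 1 - M := by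
    intro σ
    have := abs_le.1 (hZ σ)
    constructor <;> simp only [hW_def] <;> [linarith [this.1]; linarith [this.2]]
  have hmgf := RSC_hoeffding_mgf p W hp h1 M hWb hW0 ε
  have hpt : ∀ s : Fin n → Ω,
      Set.indicator {s : Fin n → Ω | (1/n : ℝ) * ∑ t, Z (s t) - M > ε}
        (fun s => ∏ t, p (s t)) s ≤
      (∏ t, p (s t)) * Real.exp (ε * (∑ t, W (s t)) - n * ε^2) := by
    intro s
    have hprodnn : (0:ℝ) ≤ ∏ t, p (s t) := Finset.prod_nonneg (fun t _ => hp _)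
    by_cases hs : s ∈ {s : Fin n → Ω | (1/n : ℝ) * ∑ t, Z (s t) - M > ε}
    · rw [Set.indicator_of_mem hs]
      have hs' : (1/n : ℝ) * ∑ t, Z (s t) - M > ε := hs
      have hnp : (0:ℝ) < n := Nat.cast_pos.2 hn
      have hSW : (n:ℝ) * ε < ∑ t, W (s t) := by
        have he : ∑ t, W (s t) = (∑ t, Z (s t)) - n * M := by
          simp [hW_def, Finset.sum_sub_distrib, Finset.card_univ, mul_comm]
        rw [he]
        have h2 : ε + M < (1/n : ℝ) * ∑ t, Z (s t) := by linarith
        have h3 := mul_lt_mul_of_pos_left h2 hnp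
        rw [← mul_assoc, mul_one_div_cancel hnp.ne', one_mul] at h3
        linarith
      have hexp : (0:ℝ) ≤ ε * (∑ t, W (s t)) - n * ε^2 := by nlinarith
      have hge : (1:ℝ) ≤ Real.exp (ε * (∑ t, W (s t)) - n * ε^2) := Real.one_le_exp hexp
      nlinarith
    · rw [Set.indicator_of_notMem hs]
      positivity
  calc ∑ s : Fin n → Ω, Set.indicator {s : Fin n → Ω | (1/n : ℝ) * ∑ t, Z (s t) - M > ε}
        (fun s => ∏ t, p (s t)) s
      ≤ ∑ s : Fin n → Ω, (∏ t, p (s t)) * Real.exp (ε * (∑ t, W (s t)) - n * ε^2) :=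
        Finset.sum_le_sum (fun s _ => hpt s)
    _ = Real.exp (-(n:ℝ) * ε^2) * ∑ s : Fin n → Ω, ∏ t, (p (s t) * Real.exp (ε * W (s t))) := by
        rw [Finset.mul_sum]
        apply Finset.sum_congr rfl
        intro s _
        rw [Finset.prod_mul_distrib, ← Real.exp_sum]
        rw [show ε * (∑ t, W (s t)) - n * ε^2 = (∑ t, ε * W (s t)) + (-(n:ℝ) * ε^2) by
          rw [Finset.mul_sum]; ring]
        rw [Real.exp_add]
        ring
    _ = Real.exp (-(n:ℝ) * ε^2) * (∑ σ, p σ * Real.exp (ε * W σ))^n := by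
        rw [Fintype.sum_pow]
    _ ≤ Real.exp (-(n:ℝ) * ε^2) * (Real.exp (ε^2/2))^n := by
        apply mul_le_mul_of_nonneg_left _ (Real.exp_pos _).le
        apply pow_le_pow_left₀ _ hmgf
        exact Finset.sum_nonneg (fun σ _ => mul_nonneg (hp σ) (Real.exp_pos _).le)
    _ = Real.exp (-(n:ℝ) * ε^2 / 2) := by
        rw [← Real.exp_nat_mul, ← Real.exp_add]
        congr 1
        ring


private lemma RSC_quad_expand {ι K' : Type*} [Fintype ι] (S : Finset K') (c : K' → ℝ)
    (Gf : K' → ι → ℝ) (w : ι → ℝ) :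
    ∑ i, w i * (∑ k ∈ S, c k * Gf k i)^2
      = ∑ k ∈ S, ∑ l ∈ S, (c k * c l) * (∑ i, w i * (Gf k i * Gf l i)) := by
  have hpt : ∀ i, w i * (∑ k ∈ S, c k * Gf k i)^2
      = ∑ k ∈ S, ∑ l ∈ S, (c k * c l) * (w i * (Gf k i * Gf l i)) := by
    intro i
    rw [sq, Finset.sum_mul_sum, Finset.mul_sum]
    apply Finset.sum_congr rfl; intro k _
    rw [Finset.mul_sum]
    apply Finset.sum_congr rfl; intro l _
    ring
  simp_rw [hpt]
  rw [Finset.sum_comm]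
  apply Finset.sum_congr rfl; intro k _
  rw [Finset.sum_comm]
  apply Finset.sum_congr rfl; intro l _
  rw [Finset.mul_sum]

private lemma RSC_quad_expand_const {ι K' : Type*} [Fintype ι] (S : Finset K') (c : K' → ℝ)
    (Gf : K' → ι → ℝ) (r : ℝ) :
    r * ∑ i, (∑ k ∈ S, c k * Gf k i)^2
      = ∑ k ∈ S, ∑ l ∈ S, (c k * c l) * (r * (∑ i, Gf k i * Gf l i)) := by
  have h := RSC_quad_expand S c Gf (fun _ => r)
  rw [Finset.mul_sum, h]
  apply Finset.sum_congr rfl; intro k _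
  apply Finset.sum_congr rfl; intro l _
  simp only [Finset.mul_sum]

private lemma RSC_quad_dev {K' : Type*} (S : Finset K') (c : K' → ℝ)
    (Ehat Mpop : K' → K' → ℝ) (ε : ℝ)
    (hdev : ∀ k ∈ S, ∀ l ∈ S, |Ehat k l - Mpop k l| ≤ ε) :
    ∑ k ∈ S, ∑ l ∈ S, (c k * c l) * Mpop k l - ε * (∑ k ∈ S, |c k|)^2
      ≤ ∑ k ∈ S, ∑ l ∈ S, (c k * c l) * Ehat k l := by
  have habs : |∑ k ∈ S, ∑ l ∈ S, (c k * c l) * (Ehat k l - Mpop k l)|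
      ≤ ε * (∑ k ∈ S, |c k|)^2 := by
    calc |∑ k ∈ S, ∑ l ∈ S, (c k * c l) * (Ehat k l - Mpop k l)|
        ≤ ∑ k ∈ S, |∑ l ∈ S, (c k * c l) * (Ehat k l - Mpop k l)| :=
          Finset.abs_sum_le_sum_abs _ _
      _ ≤ ∑ k ∈ S, ∑ l ∈ S, |(c k * c l) * (Ehat k l - Mpop k l)| :=
          Finset.sum_le_sum (fun k _ => Finset.abs_sum_le_sum_abs _ _)
      _ ≤ ∑ k ∈ S, ∑ l ∈ S, (|c k| * |c l|) * ε := by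
          apply Finset.sum_le_sum; intro k hk
          apply Finset.sum_le_sum; intro l hl
          rw [abs_mul, abs_mul]
          exact mul_le_mul_of_nonneg_left (hdev k hk l hl)
            (mul_nonneg (abs_nonneg _) (abs_nonneg _))
      _ = ε * (∑ k ∈ S, |c k|)^2 := by
          rw [show (∑ k ∈ S, ∑ l ∈ S, (|c k| * |c l|) * ε)
              = (∑ k ∈ S, ∑ l ∈ S, |c k| * |c l|) * ε from by
            rw [Finset.sum_mul]
            exact Finset.sum_congr rfl fun k _ => (Finset.sum_mul _ _ _).symm]
          rw [← Finset.sum_mul_sum]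
          ring
  have hsum : ∑ k ∈ S, ∑ l ∈ S, (c k * c l) * Ehat k l
      = (∑ k ∈ S, ∑ l ∈ S, (c k * c l) * Mpop k l)
        + ∑ k ∈ S, ∑ l ∈ S, (c k * c l) * (Ehat k l - Mpop k l) := by
    rw [← Finset.sum_add_distrib]
    apply Finset.sum_congr rfl; intro k _
    rw [← Finset.sum_add_distrib]
    apply Finset.sum_congr rfl; intro l _
    ring
  have := (abs_le.1 habs).1
  linarith

end Helpers

/-- Proposition 2 (restricted strong convexity for GRISE): under the local learnability
condition with constant `ρ_u > 0` (for a seminorm `N` on the target coordinates `T_u`),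
if `n > (2/ε₂²) log(2𝐊_u²/δ₂)`, then with probability at least `1 − δ₂` under `μ^⊗n`,
for all `Δ` in the perturbation set `X_u`:
`δS_n(Δ, θ*) ≥ exp(−γ)(ρ_u N(Δ_{T_u})² − ε₂‖Δ‖₁²)/(2 + ‖Δ‖₁)`. -/
theorem restricted_strong_convexity
    {V : Type*} [Fintype V] [DecidableEq V]
    (A : V → Type*) [∀ i, Fintype (A i)] [∀ i, Nonempty (A i)]
    {K : Type*} [Fintype K]
    (nbr : K → Finset V) (f : K → (∀ i, A i) → ℝ)
    (hloc : ∀ k (σ τ : ∀ i, A i), (∀ i ∈ nbr k, σ i = τ i) → f k σ = f k τ)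
    (θ : K → ℝ) (γ : ℝ)
    (hγ : ∀ (i : V) (σ : ∀ j, A j), |∑ k ∈ Kat nbr i, θ k * locg A f i k σ| ≤ γ)
    (μ : (∀ i, A i) → ℝ)
    (hμ : ∀ σ, μ σ =
      Real.exp (∑ k, θ k * f k σ) / ∑ τ : ∀ i, A i, Real.exp (∑ k, θ k * f k τ))
    (u : V)
    (hg : ∀ k ∈ Kat nbr u, ∀ σ : ∀ i, A i, |locg A f u k σ| ≤ 1)
    (Xu : Set (K → ℝ)) (Tu : Finset K) (hTu : Tu ⊆ Kat nbr u)
    (N : Seminorm ℝ ({k : K // k ∈ Tu} → ℝ)) (ρu : ℝ) (hρ : 0 < ρu)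
    (hLLC : ∀ x ∈ Xu,
      ∑ σ : ∀ i, A i, μ σ * (∑ k ∈ Kat nbr u, x k * locg A f u k σ) ^ 2 ≥
        ρu * N (restr Tu x) ^ 2)
    (ε₂ δ₂ : ℝ) (hε : 0 < ε₂) (hδ : 0 < δ₂) (hδ' : δ₂ < 1)
    (n : ℕ)
    (hn : (n : ℝ) > 2 / ε₂ ^ 2 * Real.log (2 * ((Kat nbr u).card : ℝ) ^ 2 / δ₂)) :
    ∑ s : Fin n → ∀ i, A i,
      Set.indicator
        {s : Fin n → ∀ i, A i | ∀ Δ ∈ Xu,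
          (1 / n : ℝ) * ∑ t : Fin n,
              Real.exp (-∑ k ∈ Kat nbr u, θ k * locg A f u k (s t)) *
                (Real.exp (-∑ k ∈ Kat nbr u, Δ k * locg A f u k (s t)) - 1 +
                  ∑ k ∈ Kat nbr u, Δ k * locg A f u k (s t)) ≥
            Real.exp (-γ) *
              (ρu * N (restr Tu Δ) ^ 2 - ε₂ * (∑ k ∈ Kat nbr u, |Δ k|) ^ 2) /
              (2 + ∑ k ∈ Kat nbr u, |Δ k|)}
        (fun s => ∏ t : Fin n, μ (s t)) s ≥ 1 - δ₂ := by
  classical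
  -- μ is a probability vector
  have hZpos : 0 < ∑ τ : ∀ i, A i, Real.exp (∑ k, θ k * f k τ) :=
    Finset.sum_pos (fun τ _ => Real.exp_pos _) Finset.univ_nonempty
  have hp : ∀ σ : ∀ i, A i, 0 ≤ μ σ := fun σ => by
    rw [hμ σ]; positivity
  have h1 : ∑ σ : ∀ i, A i, μ σ = 1 := by
    simp_rw [hμ]; rw [← Finset.sum_div]; exact div_self hZpos.ne'
  have hPnn : ∀ s : Fin n → ∀ i, A i, 0 ≤ ∏ t, μ (s t) :=
    fun s => Finset.prod_nonneg (fun t _ => hp _)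
  have htot : ∑ s : Fin n → ∀ i, A i, ∏ t, μ (s t) = 1 := by
    rw [← Fintype.sum_pow, h1, one_pow]
  set Mkl : K → K → ℝ :=
    fun k l => ∑ σ : ∀ i, A i, μ σ * (locg A f u k σ * locg A f u l σ) with hMkl
  set G : Set (Fin n → ∀ i, A i) :=
    {s | ∀ k ∈ Kat nbr u, ∀ l ∈ Kat nbr u,
      |(1/n : ℝ) * (∑ t, locg A f u k (s t) * locg A f u l (s t)) - Mkl k l| ≤ ε₂} with hGdef
  set Ev : Set (Fin n → ∀ i, A i) :=
    {s : Fin n → ∀ i, A i | ∀ Δ ∈ Xu,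
      (1 / n : ℝ) * ∑ t : Fin n,
          Real.exp (-∑ k ∈ Kat nbr u, θ k * locg A f u k (s t)) *
            (Real.exp (-∑ k ∈ Kat nbr u, Δ k * locg A f u k (s t)) - 1 +
              ∑ k ∈ Kat nbr u, Δ k * locg A f u k (s t)) ≥
        Real.exp (-γ) *
          (ρu * N (restr Tu Δ) ^ 2 - ε₂ * (∑ k ∈ Kat nbr u, |Δ k|) ^ 2) /
          (2 + ∑ k ∈ Kat nbr u, |Δ k|)} with hEv
  -- ======================= deterministic part: G ⊆ Ev =======================
  have hsub : G ⊆ Ev := by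
    intro s hs
    have hsG : ∀ k ∈ Kat nbr u, ∀ l ∈ Kat nbr u,
        |(1/n : ℝ) * (∑ t, locg A f u k (s t) * locg A f u l (s t)) - Mkl k l| ≤ ε₂ := hs
    simp only [hEv, Set.mem_setOf_eq]
    intro Δ hΔ
    set L : ℝ := ∑ k ∈ Kat nbr u, |Δ k| with hL
    have hL0 : 0 ≤ L := Finset.sum_nonneg (fun k _ => abs_nonneg _)
    have h2L : (0:ℝ) < 2 + L := by linarith
    -- pointwise lower bound on each sample term
    have hterm : ∀ t : Fin n,
        Real.exp (-γ) * ((∑ k ∈ Kat nbr u, Δ k * locg A f u k (s t))^2 / (2 + L)) ≤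
        Real.exp (-∑ k ∈ Kat nbr u, θ k * locg A f u k (s t)) *
          (Real.exp (-∑ k ∈ Kat nbr u, Δ k * locg A f u k (s t)) - 1 +
            ∑ k ∈ Kat nbr u, Δ k * locg A f u k (s t)) := by
      intro t
      set y := ∑ k ∈ Kat nbr u, Δ k * locg A f u k (s t) with hy
      have hyb : |y| ≤ L := by
        rw [hy, hL]
        calc |∑ k ∈ Kat nbr u, Δ k * locg A f u k (s t)|
            ≤ ∑ k ∈ Kat nbr u, |Δ k * locg A f u k (s t)| := Finset.abs_sum_le_sum_abs _ _
          _ ≤ ∑ k ∈ Kat nbr u, |Δ k| := Finset.sum_le_sum (fun k hk => by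
              rw [abs_mul]
              nlinarith [abs_nonneg (Δ k), hg k hk (s t),
                abs_nonneg (locg A f u k (s t))])
      have hkey := RSC_key_ineq y
      have hdiv : y^2/(2+L) ≤ y^2/(2+|y|) := by
        apply div_le_div_of_nonneg_left (sq_nonneg y) (by positivity)
        linarith
      have hHle : Real.exp (-γ) ≤
          Real.exp (-∑ k ∈ Kat nbr u, θ k * locg A f u k (s t)) := by
        apply Real.exp_le_exp.2
        have := abs_le.1 (hγ u (s t))
        linarith [this.2]
      have hpos2 : 0 ≤ y^2/(2+L) := by positivity
      exact mul_le_mul hHle (le_trans hdiv hkey) hpos2 (Real.exp_pos _).le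
    -- quadratic form comparison
    have hemp : (1/n:ℝ) * ∑ t, (∑ k ∈ Kat nbr u, Δ k * locg A f u k (s t))^2
        = ∑ k ∈ Kat nbr u, ∑ l ∈ Kat nbr u, (Δ k * Δ l) *
            ((1/n:ℝ) * ∑ t, locg A f u k (s t) * locg A f u l (s t)) :=
      RSC_quad_expand_const (Kat nbr u) Δ (fun k t => locg A f u k (s t)) (1/n : ℝ)
    have hpop : (∑ σ : ∀ i, A i, μ σ * (∑ k ∈ Kat nbr u, Δ k * locg A f u k σ)^2)
        = ∑ k ∈ Kat nbr u, ∑ l ∈ Kat nbr u, (Δ k * Δ l) * Mkl k l :=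
      RSC_quad_expand (Kat nbr u) Δ (fun k σ => locg A f u k σ) μ
    have hLLC' := hLLC Δ hΔ
    rw [ge_iff_le, hpop] at hLLC'
    have hdevs := RSC_quad_dev (Kat nbr u) Δ
      (fun k l => (1/n:ℝ) * (∑ t, locg A f u k (s t) * locg A f u l (s t))) Mkl ε₂
      (fun k hk l hl => hsG k hk l hl)
    have hQ : ρu * N (restr Tu Δ) ^ 2 - ε₂ * L ^ 2 ≤
        (1/n:ℝ) * ∑ t, (∑ k ∈ Kat nbr u, Δ k * locg A f u k (s t))^2 := by
      rw [hemp]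
      calc ρu * N (restr Tu Δ) ^ 2 - ε₂ * L ^ 2
          ≤ (∑ k ∈ Kat nbr u, ∑ l ∈ Kat nbr u, (Δ k * Δ l) * Mkl k l) - ε₂ * L ^ 2 := by
            linarith
        _ ≤ _ := by
            rw [hL] at *
            linarith [hdevs]
    rw [ge_iff_le]
    calc Real.exp (-γ) * (ρu * N (restr Tu Δ) ^ 2 - ε₂ * L ^ 2) / (2 + L)
        = (Real.exp (-γ) / (2 + L)) * (ρu * N (restr Tu Δ) ^ 2 - ε₂ * L ^ 2) := by ring
      _ ≤ (Real.exp (-γ) / (2 + L)) *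
            ((1/n:ℝ) * ∑ t, (∑ k ∈ Kat nbr u, Δ k * locg A f u k (s t))^2) :=
          mul_le_mul_of_nonneg_left hQ (div_nonneg (Real.exp_pos _).le h2L.le)
      _ = (1 / n : ℝ) * ∑ t, Real.exp (-γ) *
            ((∑ k ∈ Kat nbr u, Δ k * locg A f u k (s t))^2 / (2 + L)) := by
          simp only [Finset.mul_sum]
          exact Finset.sum_congr rfl fun t _ => by ring
      _ ≤ (1 / n : ℝ) * ∑ t : Fin n,
            Real.exp (-∑ k ∈ Kat nbr u, θ k * locg A f u k (s t)) *
              (Real.exp (-∑ k ∈ Kat nbr u, Δ k * locg A f u k (s t)) - 1 +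
                ∑ k ∈ Kat nbr u, Δ k * locg A f u k (s t)) :=
          mul_le_mul_of_nonneg_left (Finset.sum_le_sum (fun t _ => hterm t)) (by positivity)
  -- ======================= probabilistic part =======================
  have hUB : ∑ s : Fin n → ∀ i, A i,
      Set.indicator Gᶜ (fun s => ∏ t, μ (s t)) s ≤ δ₂ := by
    rcases Finset.eq_empty_or_nonempty (Kat nbr u) with hKe | hKne
    · have hallG : ∀ s : Fin n → ∀ i, A i, s ∈ G := by
        intro s k hk l hl
        rw [hKe] at hk
        exact absurd hk (Finset.notMem_empty k)
      calc ∑ s : Fin n → ∀ i, A i, Set.indicator Gᶜ (fun s => ∏ t, μ (s t)) s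
          = 0 := Finset.sum_eq_zero (fun s _ =>
              Set.indicator_of_notMem (by simp [hallG s]) _)
        _ ≤ δ₂ := hδ.le
    · have hm1 : (1:ℝ) ≤ ((Kat nbr u).card : ℝ) := by
        exact_mod_cast Finset.card_pos.2 hKne
      have hargpos : (0:ℝ) < 2 * ((Kat nbr u).card:ℝ)^2 / δ₂ := by positivity
      have harg1 : (1:ℝ) < 2 * ((Kat nbr u).card:ℝ)^2 / δ₂ := by
        rw [lt_div_iff₀ hδ]; nlinarith
      have hlogpos := Real.log_pos harg1
      have hnpos : 0 < n := by
        have h0 : (0:ℝ) < (n:ℝ) :=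
          lt_trans (mul_pos (by positivity) hlogpos) hn
        exact_mod_cast h0
      -- per-pair Chernoff bound (both tails)
      have hpair : ∀ k ∈ Kat nbr u, ∀ l ∈ Kat nbr u,
          (∑ s : Fin n → ∀ i, A i, Set.indicator {s : Fin n → ∀ i, A i |
              (1/n:ℝ) * ∑ t, locg A f u k (s t) * locg A f u l (s t) - Mkl k l > ε₂}
              (fun s => ∏ t, μ (s t)) s)
          + (∑ s : Fin n → ∀ i, A i, Set.indicator {s : Fin n → ∀ i, A i |
              (1/n:ℝ) * ∑ t, -(locg A f u k (s t) * locg A f u l (s t)) - -(Mkl k l) > ε₂}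
              (fun s => ∏ t, μ (s t)) s)
          ≤ 2 * Real.exp (-(n:ℝ) * ε₂^2 / 2) := by
        intro k hk l hl
        have hZ1 : ∀ σ : ∀ i, A i, |locg A f u k σ * locg A f u l σ| ≤ 1 := fun σ => by
          rw [abs_mul]
          nlinarith [hg k hk σ, hg l hl σ, abs_nonneg (locg A f u k σ),
            abs_nonneg (locg A f u l σ)]
        have c1 := RSC_chernoff_tail μ (fun σ => locg A f u k σ * locg A f u l σ)
          hp h1 hZ1 (Mkl k l) rfl ε₂ hε n hnpos
        have c2 := RSC_chernoff_tail μ (fun σ => -(locg A f u k σ * locg A f u l σ))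
          hp h1 (fun σ => by rw [abs_neg]; exact hZ1 σ) (-(Mkl k l))
          (by
            rw [hMkl]
            rw [← Finset.sum_neg_distrib]
            exact Finset.sum_congr rfl fun σ _ => by ring)
          ε₂ hε n hnpos
        linarith
      -- union bound, pointwise
      have hptw : ∀ s : Fin n → ∀ i, A i,
          Set.indicator Gᶜ (fun s => ∏ t, μ (s t)) s ≤
          ∑ k ∈ Kat nbr u, ∑ l ∈ Kat nbr u,
            (Set.indicator {s : Fin n → ∀ i, A i |
                (1/n:ℝ) * ∑ t, locg A f u k (s t) * locg A f u l (s t) - Mkl k l > ε₂}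
                (fun s => ∏ t, μ (s t)) s
            + Set.indicator {s : Fin n → ∀ i, A i |
                (1/n:ℝ) * ∑ t, -(locg A f u k (s t) * locg A f u l (s t)) - -(Mkl k l) > ε₂}
                (fun s => ∏ t, μ (s t)) s) := by
        intro s
        have hnn : ∀ k ∈ Kat nbr u, (0:ℝ) ≤
            ∑ l ∈ Kat nbr u,
              (Set.indicator {s : Fin n → ∀ i, A i |
                  (1/n:ℝ) * ∑ t, locg A f u k (s t) * locg A f u l (s t) - Mkl k l > ε₂}
                  (fun s => ∏ t, μ (s t)) s
              + Set.indicator {s : Fin n → ∀ i, A i |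
                  (1/n:ℝ) * ∑ t, -(locg A f u k (s t) * locg A f u l (s t)) - -(Mkl k l) > ε₂}
                  (fun s => ∏ t, μ (s t)) s) := by
          intro k _
          apply Finset.sum_nonneg
          intro l _
          exact add_nonneg (Set.indicator_nonneg (fun x _ => hPnn x) s)
            (Set.indicator_nonneg (fun x _ => hPnn x) s)
        by_cases hsG : s ∈ G
        · rw [Set.indicator_of_notMem (by simpa using hsG)]
          exact Finset.sum_nonneg hnn
        · rw [Set.indicator_of_mem (by simpa using hsG)]
          have hsG' : ¬ (∀ k ∈ Kat nbr u, ∀ l ∈ Kat nbr u,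
              |(1/n : ℝ) * (∑ t, locg A f u k (s t) * locg A f u l (s t)) - Mkl k l| ≤ ε₂) :=
            hsG
          push_neg at hsG'
          obtain ⟨k, hk, l, hl, hviol⟩ := hsG'
          have hone : (∏ t, μ (s t)) ≤
              Set.indicator {s : Fin n → ∀ i, A i |
                  (1/n:ℝ) * ∑ t, locg A f u k (s t) * locg A f u l (s t) - Mkl k l > ε₂}
                  (fun s => ∏ t, μ (s t)) s
              + Set.indicator {s : Fin n → ∀ i, A i |
                  (1/n:ℝ) * ∑ t, -(locg A f u k (s t) * locg A f u l (s t)) - -(Mkl k l) > ε₂}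
                  (fun s => ∏ t, μ (s t)) s := by
            rcases lt_abs.1 hviol with hgt | hlt
            · rw [Set.indicator_of_mem (show s ∈ _ from hgt)]
              linarith [Set.indicator_nonneg (fun (x : Fin n → ∀ i, A i) (_ : x ∈
                {s : Fin n → ∀ i, A i |
                  (1/n:ℝ) * ∑ t, -(locg A f u k (s t) * locg A f u l (s t)) - -(Mkl k l) > ε₂})
                => hPnn x) s]
            · have hmem : s ∈ {s : Fin n → ∀ i, A i |
                  (1/n:ℝ) * ∑ t, -(locg A f u k (s t) * locg A f u l (s t)) - -(Mkl k l) > ε₂} := by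
                simp only [Set.mem_setOf_eq, Finset.sum_neg_distrib, mul_neg]
                linarith
              rw [Set.indicator_of_mem hmem]
              linarith [Set.indicator_nonneg (fun (x : Fin n → ∀ i, A i) (_ : x ∈
                {s : Fin n → ∀ i, A i |
                  (1/n:ℝ) * ∑ t, locg A f u k (s t) * locg A f u l (s t) - Mkl k l > ε₂})
                => hPnn x) s]
          calc (∏ t, μ (s t)) ≤ _ := hone
            _ ≤ ∑ l ∈ Kat nbr u,
                (Set.indicator {s : Fin n → ∀ i, A i |
                    (1/n:ℝ) * ∑ t, locg A f u k (s t) * locg A f u l (s t) - Mkl k l > ε₂}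
                    (fun s => ∏ t, μ (s t)) s
                + Set.indicator {s : Fin n → ∀ i, A i |
                    (1/n:ℝ) * ∑ t, -(locg A f u k (s t) * locg A f u l (s t)) - -(Mkl k l) > ε₂}
                    (fun s => ∏ t, μ (s t)) s) :=
              Finset.single_le_sum (f := fun l =>
                Set.indicator {s : Fin n → ∀ i, A i |
                    (1/n:ℝ) * ∑ t, locg A f u k (s t) * locg A f u l (s t) - Mkl k l > ε₂}
                    (fun s => ∏ t, μ (s t)) s
                + Set.indicator {s : Fin n → ∀ i, A i |
                    (1/n:ℝ) * ∑ t, -(locg A f u k (s t) * locg A f u l (s t)) - -(Mkl k l) > ε₂}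
                    (fun s => ∏ t, μ (s t)) s) (fun l _ =>
                add_nonneg (Set.indicator_nonneg (fun x _ => hPnn x) s)
                  (Set.indicator_nonneg (fun x _ => hPnn x) s)) hl
            _ ≤ _ := Finset.single_le_sum (f := fun k => ∑ l ∈ Kat nbr u,
                (Set.indicator {s : Fin n → ∀ i, A i |
                    (1/n:ℝ) * ∑ t, locg A f u k (s t) * locg A f u l (s t) - Mkl k l > ε₂}
                    (fun s => ∏ t, μ (s t)) s
                + Set.indicator {s : Fin n → ∀ i, A i |
                    (1/n:ℝ) * ∑ t, -(locg A f u k (s t) * locg A f u l (s t)) - -(Mkl k l) > ε₂}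
                    (fun s => ∏ t, μ (s t)) s)) hnn hk
      -- summing up
      calc ∑ s : Fin n → ∀ i, A i, Set.indicator Gᶜ (fun s => ∏ t, μ (s t)) s
          ≤ ∑ s : Fin n → ∀ i, A i, ∑ k ∈ Kat nbr u, ∑ l ∈ Kat nbr u,
              (Set.indicator {s : Fin n → ∀ i, A i |
                  (1/n:ℝ) * ∑ t, locg A f u k (s t) * locg A f u l (s t) - Mkl k l > ε₂}
                  (fun s => ∏ t, μ (s t)) s
              + Set.indicator {s : Fin n → ∀ i, A i |
                  (1/n:ℝ) * ∑ t, -(locg A f u k (s t) * locg A f u l (s t)) - -(Mkl k l) > ε₂}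
                  (fun s => ∏ t, μ (s t)) s) :=
            Finset.sum_le_sum (fun s _ => hptw s)
        _ = ∑ k ∈ Kat nbr u, ∑ l ∈ Kat nbr u, ∑ s : Fin n → ∀ i, A i,
              (Set.indicator {s : Fin n → ∀ i, A i |
                  (1/n:ℝ) * ∑ t, locg A f u k (s t) * locg A f u l (s t) - Mkl k l > ε₂}
                  (fun s => ∏ t, μ (s t)) s
              + Set.indicator {s : Fin n → ∀ i, A i |
                  (1/n:ℝ) * ∑ t, -(locg A f u k (s t) * locg A f u l (s t)) - -(Mkl k l) > ε₂}
                  (fun s => ∏ t, μ (s t)) s) := by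
            rw [Finset.sum_comm]
            exact Finset.sum_congr rfl fun k _ => Finset.sum_comm
        _ ≤ ∑ k ∈ Kat nbr u, ∑ l ∈ Kat nbr u, 2 * Real.exp (-(n:ℝ) * ε₂^2 / 2) := by
            apply Finset.sum_le_sum
            intro k hk
            apply Finset.sum_le_sum
            intro l hl
            rw [Finset.sum_add_distrib]
            exact hpair k hk l hl
        _ = ((Kat nbr u).card : ℝ)^2 * (2 * Real.exp (-(n:ℝ) * ε₂^2 / 2)) := by
            rw [Finset.sum_const, Finset.sum_const, nsmul_eq_mul, nsmul_eq_mul]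
            ring
        _ ≤ δ₂ := by
            have hlt : 2 * ((Kat nbr u).card:ℝ)^2 / δ₂ < Real.exp ((n:ℝ) * ε₂^2 / 2) := by
              rw [← Real.exp_log hargpos]
              apply Real.exp_lt_exp.2
              have hcalc : Real.log (2 * ((Kat nbr u).card:ℝ)^2 / δ₂)
                  = (2 / ε₂^2 * Real.log (2 * ((Kat nbr u).card:ℝ)^2 / δ₂)) * (ε₂^2/2) := by
                field_simp
              rw [hcalc]
              calc (2 / ε₂^2 * Real.log (2 * ((Kat nbr u).card:ℝ)^2 / δ₂)) * (ε₂^2/2)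
                  < (n:ℝ) * (ε₂^2/2) := by
                    apply mul_lt_mul_of_pos_right hn (by positivity)
                _ = (n:ℝ) * ε₂^2 / 2 := by ring
            have hEpos := Real.exp_pos ((n:ℝ) * ε₂^2 / 2)
            rw [show -(n:ℝ) * ε₂^2 / 2 = -((n:ℝ) * ε₂^2 / 2) by ring, Real.exp_neg]
            rw [div_lt_iff₀ hδ] at hlt
            rw [show ((Kat nbr u).card:ℝ)^2 * (2 * (Real.exp ((n:ℝ) * ε₂^2 / 2))⁻¹)
                = (2 * ((Kat nbr u).card:ℝ)^2) / Real.exp ((n:ℝ) * ε₂^2 / 2) from by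
              field_simp]
            rw [div_le_iff₀ hEpos]
            nlinarith
  -- ======================= assembly =======================
  have hmono : ∑ s : Fin n → ∀ i, A i, Set.indicator G (fun s => ∏ t, μ (s t)) s ≤
      ∑ s : Fin n → ∀ i, A i, Set.indicator Ev (fun s => ∏ t, μ (s t)) s :=
    Finset.sum_le_sum (fun s _ =>
      Set.indicator_le_indicator_of_subset hsub hPnn s)
  have hsplit : ∑ s : Fin n → ∀ i, A i, Set.indicator G (fun s => ∏ t, μ (s t)) s =
      1 - ∑ s : Fin n → ∀ i, A i, Set.indicator Gᶜ (fun s => ∏ t, μ (s t)) s := by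
    rw [← htot, ← Finset.sum_sub_distrib]
    apply Finset.sum_congr rfl
    intro s _
    by_cases hs : s ∈ G
    · rw [Set.indicator_of_mem hs, Set.indicator_of_notMem (by simpa using hs)]
      ring
    · rw [Set.indicator_of_notMem hs, Set.indicator_of_mem (by simpa using hs)]
      ring
  rw [ge_iff_le]
  calc (1:ℝ) - δ₂
      ≤ 1 - ∑ s : Fin n → ∀ i, A i, Set.indicator Gᶜ (fun s => ∏ t, μ (s t)) s := by
        linarith
    _ = ∑ s : Fin n → ∀ i, A i, Set.indicator G (fun s => ∏ t, μ (s t)) s := hsplit.symm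
    _ ≤ _ := hmono
end
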